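/- Fix an integer k ≥ 5. There exists a constant α ≥ 0 (possibly depending on k but not on n) such that for every n ≥ 1 there is a deterministic online strategy A_n for exploring the ladder grid G_{2,n} satisfying cost(A_n(w)) ≤ 4·OPT(w) + α for every weighting w of G_{2,n} with weights in {1,k}. That is, there is a 4-competitive deterministic online algorithm for exploring weighted ladder grids with weights in {1,k}. -/

import Mathlib

/-- Vertices are pairs of naturals (row, column). -/
abbrev V : Type := ℕ × ℕ

/-- Membership in the ladder grid `G_{2,n}`: row 1 or 2, column between 1 and n. -/
def InLadder (n : ℕ) (v : V) : Prop :=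
  (v.1 = 1 ∨ v.1 = 2) ∧ 1 ≤ v.2 ∧ v.2 ≤ n

/-- Adjacency in the ladder grid `G_{2,n}`: both endpoints in the grid and
L1-distance exactly 1. -/
def LadderAdj (n : ℕ) (u v : V) : Prop :=
  InLadder n u ∧ InLadder n v ∧
    ((u.1 = v.1 ∧ (u.2 + 1 = v.2 ∨ v.2 + 1 = u.2)) ∨
     (u.2 = v.2 ∧ (u.1 + 1 = v.1 ∨ v.1 + 1 = u.1)))

/-- A weighting of `G_{2,n}` with weights in `{1, k}`, given as a symmetric
function on pairs of vertices. -/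
def IsWeighting (n k : ℕ) (w : V → V → ℕ) : Prop :=
  (∀ u v, w u v = w v u) ∧ (∀ u v, LadderAdj n u v → w u v = 1 ∨ w u v = k)

/-- The cost of a walk (a list of vertices): sum of the weights of the traversed
edges, with multiplicity. -/
def walkCost (w : V → V → ℕ) (p : List V) : ℕ :=
  ((p.zip p.tail).map fun e => w e.1 e.2).sum

/-- A walk in `G_{2,n}` starting at `s`. -/
def IsWalkFrom (n : ℕ) (s : V) (p : List V) : Prop :=
  p.head? = some s ∧ p.Chain' (LadderAdj n)

/-- An exploration walk: a walk starting at `(1,1)` visiting every vertex of the ladder. -/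
def IsExploration (n : ℕ) (p : List V) : Prop :=
  IsWalkFrom n (1, 1) p ∧ ∀ v, InLadder n v → v ∈ p

/-- `OPT`: the minimum cost of an exploration walk of `G_{2,n}` under the weighting `w`. -/
noncomputable def OPT (n : ℕ) (w : V → V → ℕ) : ℕ :=
  sInf {c | ∃ p, IsExploration n p ∧ walkCost w p = c}

/-- A deterministic online strategy for exploring `G_{2,n}` with weights in `{1,k}`:
it outputs an exploration walk for every weighting, and if two weightings agree on
all edges incident to the first `t+1` visited vertices, then the first `t+2`
vertices of the corresponding walks coincide. -/
def OnlineStrategy (n k : ℕ) (A : (V → V → ℕ) → List V) : Prop :=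
  (∀ w, IsWeighting n k w → IsExploration n (A w)) ∧
  (∀ w w', IsWeighting n k w → IsWeighting n k w' → ∀ t : ℕ,
    (∀ u v, LadderAdj n u v →
      (u ∈ (A w).take (t + 1) ∨ v ∈ (A w).take (t + 1)) → w u v = w' u v) →
    (A w).take (t + 2) = (A w').take (t + 2))

namespace LP

instance (n : ℕ) (v : V) : Decidable (InLadder n v) := by unfold InLadder; infer_instance
instance (n : ℕ) (u v : V) : Decidable (LadderAdj n u v) := by unfold LadderAdj; infer_instance

lemma ladderAdj_symm {n : ℕ} {u v : V} (h : LadderAdj n u v) : LadderAdj n v u := by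
  obtain ⟨h1, h2, h3⟩ := h
  exact ⟨h2, h1, by tauto⟩

/-- candidate neighbours -/
def nbrs (n : ℕ) (u : V) : List V :=
  [(u.1, u.2+1), (u.1, u.2-1), (3-u.1, u.2)].filter (fun v => decide (LadderAdj n u v))

lemma mem_nbrs_adj {n : ℕ} {u v : V} (h : v ∈ nbrs n u) : LadderAdj n u v := by
  unfold nbrs at h
  rw [List.mem_filter] at h
  exact of_decide_eq_true h.2

lemma adj_mem_nbrs {n : ℕ} {u v : V} (h : LadderAdj n u v) : v ∈ nbrs n u := by
  unfold nbrs
  rw [List.mem_filter]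
  refine ⟨?_, decide_eq_true h⟩
  obtain ⟨⟨hu1, hu2, hu3⟩, ⟨hv1, hv2, hv3⟩, hc⟩ := h
  obtain ⟨a, b⟩ := u
  obtain ⟨c, d⟩ := v
  simp only [List.mem_cons, List.mem_singleton, Prod.mk.injEq] at *
  omega

lemma nbrs_len {n : ℕ} (u : V) : (nbrs n u).length ≤ 3 := by
  unfold nbrs
  exact le_trans (List.length_filter_le _ _) (by simp)

/-- walkCost basic lemmas -/
lemma walkCost_nil (w : V → V → ℕ) : walkCost w [] = 0 := rfl
lemma walkCost_single (w : V → V → ℕ) (a : V) : walkCost w [a] = 0 := rfl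
lemma walkCost_cons_cons (w : V → V → ℕ) (a b : V) (l : List V) :
    walkCost w (a :: b :: l) = w a b + walkCost w (b :: l) := rfl

lemma walkCost_append_last (w : V → V → ℕ) :
    ∀ (l : List V) (x a : V), walkCost w (l ++ [x, a]) = walkCost w (l ++ [x]) + w x a := by
  intro l
  induction l with
  | nil => intro x a; simp [walkCost]
  | cons b t ih =>
    intro x a
    cases t with
    | nil => simp [walkCost]
    | cons c t' =>
      have h1 : (b :: c :: t') ++ [x, a] = b :: ((c :: t') ++ [x, a]) := rfl
      have h2 : (b :: c :: t') ++ [x] = b :: ((c :: t') ++ [x]) := rfl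
      have e1 : (c :: t') ++ [x, a] = c :: (t' ++ [x, a]) := rfl
      have e2 : (c :: t') ++ [x] = c :: (t' ++ [x]) := rfl
      have g1 : walkCost w ((b :: c :: t') ++ [x, a]) = w b c + walkCost w ((c :: t') ++ [x, a]) := by
        rw [h1, e1]; exact walkCost_cons_cons w b c (t' ++ [x, a])
      have g2 : walkCost w ((b :: c :: t') ++ [x]) = w b c + walkCost w ((c :: t') ++ [x]) := by
        rw [h2, e2]; exact walkCost_cons_cons w b c (t' ++ [x])
      rw [g1, g2, ih x a]
      ring

lemma walkCost_reverse (w : V → V → ℕ) (hsym : ∀ u v, w u v = w v u) :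
    ∀ p : List V, walkCost w p.reverse = walkCost w p := by
  intro p
  induction p with
  | nil => rfl
  | cons a t ih =>
    cases t with
    | nil => rfl
    | cons b t' =>
      have h0 : (a :: b :: t').reverse = t'.reverse ++ [b, a] := by simp
      have hb : (b :: t').reverse = t'.reverse ++ [b] := by simp
      rw [h0, walkCost_append_last w t'.reverse b a, ← hb, ih, walkCost_cons_cons, hsym a b]
      ring

section Engine

variable (n : ℕ) (w : V → V → ℕ)

inductive Frame : Type
  | f1 : V → Option V → List V → Frame
  | mk2 : V → Option V → Frame
  | f2 : V → Option V → List V → Frame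
deriving DecidableEq

structure St : Type where
  walk : List V
  vis : Finset V
  vis2 : Finset V
  ds : List V
  ctrl : List Frame
deriving DecidableEq

def step (σ : St) : St :=
  match σ.ctrl with
  | [] => σ
  | .f1 u par pend :: rest =>
    match pend with
    | [] =>
      match par with
      | some x => { σ with walk := x :: σ.walk, ctrl := rest }
      | none => { σ with ctrl := rest }
    | v :: pend' =>
      if v ∉ σ.vis ∧ w u v = 1 then
        { σ with walk := v :: σ.walk, vis := insert v σ.vis,
                 ctrl := .f1 v (some u) (nbrs n v) :: .f1 u par pend' :: rest }
      else { σ with ctrl := .f1 u par pend' :: rest }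
  | .mk2 v par :: rest =>
      { σ with vis2 := insert v σ.vis2, ctrl := .f2 v par (nbrs n v) :: rest }
  | .f2 u par pend :: rest =>
    match pend with
    | [] =>
      match par with
      | some x => { σ with walk := x :: σ.walk, ctrl := rest }
      | none => { σ with ctrl := rest }
    | v :: pend' =>
      if w u v = 1 then
        if v ∈ σ.vis ∧ v ∉ σ.vis2 then
          { σ with walk := v :: σ.walk, vis2 := insert v σ.vis2,
                   ctrl := .f2 v (some u) (nbrs n v) :: .f2 u par pend' :: rest }
        else { σ with ctrl := .f2 u par pend' :: rest }
      else
        if v ∉ σ.vis then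
          { σ with walk := v :: σ.walk, vis := insert v σ.vis, ds := σ.ds ++ [v],
                   ctrl := .f1 v none (nbrs n v) :: .mk2 v (some u) :: .f2 u par pend' :: rest }
        else { σ with ctrl := .f2 u par pend' :: rest }

def start : V := (1, 1)

def init : St :=
  { walk := [start], vis := {start}, vis2 := ∅, ds := [],
    ctrl := [.f1 start none (nbrs n start), .mk2 start none] }

def run : ℕ → St → St
  | 0, σ => σ
  | f + 1, σ => run f (step n w σ)

/-- the online algorithm -/
def algo : List V := (run n w (40 * n + 40) (init n)).walk.reverse

/-- measure for termination -/
def fmeas : Frame → ℕ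
  | .f1 _ _ p => 2 * p.length + 1
  | .mk2 _ _ => 1
  | .f2 _ _ p => 2 * p.length + 1

def meas (σ : St) : ℕ :=
  10 * (4 * n - σ.vis.card - σ.vis2.card) + (σ.ctrl.map fmeas).sum

end Engine

section Invariants

def light (n : ℕ) (w : V → V → ℕ) (u v : V) : Prop := LadderAdj n u v ∧ w u v = 1

lemma light_symm {n : ℕ} {w : V → V → ℕ} (hw : ∀ u v, w u v = w v u) :
    Symmetric (light n w) := by
  intro u v ⟨h1, h2⟩
  exact ⟨ladderAdj_symm h1, by rw [hw]; exact h2⟩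

def fvert : Frame → V
  | .f1 u _ _ => u
  | .mk2 v _ => v
  | .f2 u _ _ => u

def fpar : Frame → Option V
  | .f1 _ p _ => p
  | .mk2 _ p => p
  | .f2 _ p _ => p

def fafter (F : Frame) : V := (fpar F).getD (fvert F)

def frameOK (n : ℕ) (vis vis2 : Finset V) : Frame → Prop
  | .f1 u par pend => u ∈ vis ∧ (∀ v ∈ pend, v ∈ nbrs n u) ∧ (∀ x, par = some x → LadderAdj n u x ∧ x ∈ vis)
  | .mk2 v par => v ∈ vis ∧ v ∉ vis2 ∧ (∀ x, par = some x → LadderAdj n v x ∧ x ∈ vis)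
  | .f2 u par pend => u ∈ vis2 ∧ (∀ v ∈ pend, v ∈ nbrs n u) ∧ (∀ x, par = some x → LadderAdj n u x ∧ x ∈ vis)

def stackOK (n : ℕ) (vis vis2 : Finset V) : List Frame → V → Prop
  | [], _ => True
  | F :: rest, p => p = fvert F ∧ frameOK n vis vis2 F ∧ stackOK n vis vis2 rest (fafter F)

def isF2 : Frame → Prop
  | .f2 _ _ _ => True
  | _ => False

def f2only (l : List Frame) : Prop := ∀ F ∈ l, isF2 F

def Struct : List Frame → Prop
  | [] => True
  | .f1 _ _ _ :: rest => Struct rest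
  | .mk2 _ _ :: rest => f2only rest
  | .f2 _ _ _ :: rest => f2only rest

def f1verts (l : List Frame) : List V :=
  l.filterMap (fun F => match F with | .f1 u _ _ => some u | _ => none)

def f2verts (l : List Frame) : List V :=
  l.filterMap (fun F => match F with | .f2 u _ _ => some u | _ => none)

def nmarks (l : List Frame) : ℕ :=
  (l.filterMap (fun F => match F with | .mk2 u _ => some u | _ => none)).length

def fdebt (w : V → V → ℕ) (F : Frame) : ℕ :=
  match fpar F with
  | some x => w (fvert F) x
  | none => 0

def debts (w : V → V → ℕ) (l : List Frame) : ℕ := (l.map (fdebt w)).sum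

structure Inv (n k : ℕ) (w : V → V → ℕ) (σ : St) : Prop where
  walk_ne : σ.walk ≠ []
  chain : σ.walk.Chain' (LadderAdj n)
  wlast : σ.walk.getLast? = some start
  vis_eq : σ.vis = σ.walk.toFinset
  vis2_sub : σ.vis2 ⊆ σ.vis
  vis_lad : ∀ v ∈ σ.vis, InLadder n v
  sok : stackOK n σ.vis σ.vis2 σ.ctrl (σ.walk.headD start)
  struct : Struct σ.ctrl
  kinv : ∀ u ∈ σ.vis, ∀ v, LadderAdj n u v → w u v = 1 →
    v ∈ σ.vis ∨ ∃ par pend, (Frame.f1 u par pend) ∈ σ.ctrl ∧ v ∈ pend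
  k2inv : ∀ u ∈ σ.vis2, ∀ v, LadderAdj n u v →
    (v ∈ σ.vis ∧ (w u v = 1 → v ∈ σ.vis2)) ∨
      ∃ par pend, (Frame.f2 u par pend) ∈ σ.ctrl ∧ v ∈ pend
  ent : ∀ x ∈ (start :: σ.ds), x ∈ σ.vis2 ∨ ∃ p, (Frame.mk2 x p) ∈ σ.ctrl
  dsvis : ∀ x ∈ (start :: σ.ds), x ∈ σ.vis
  cmp : ∀ u ∈ σ.vis, ∃ x ∈ (start :: σ.ds), Relation.ReflTransGen (light n w) x u
  pw : (start :: σ.ds).Pairwise (fun a b => ¬ Relation.ReflTransGen (light n w) a b)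
  ledger : walkCost w σ.walk + debts w σ.ctrl + 4 ≤
    2 * σ.vis.card + 2 * (σ.vis2.card + nmarks σ.ctrl) + 2 * k * σ.ds.length

end Invariants

section Helpers

lemma stackOK_mono {n : ℕ} {vis vis2 vis' vis2' : Finset V} (h1 : vis ⊆ vis') (h2 : vis2 ⊆ vis2') :
    ∀ (l : List Frame) (p : V), (∀ (u : V) (q : Option V), Frame.mk2 u q ∈ l → u ∉ vis2') →
      stackOK n vis vis2 l p → stackOK n vis' vis2' l p := by
  intro l
  induction l with
  | nil => intro p _ _; trivial
  | cons F rest ih =>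
    intro p h3 hp
    obtain ⟨e1, e2, e3⟩ := hp
    refine ⟨e1, ?_, ih _ (fun u q hm => h3 u q (List.mem_cons_of_mem _ hm)) e3⟩
    cases F with
    | f1 u par pend =>
      exact ⟨h1 e2.1, e2.2.1, fun x hx => ⟨(e2.2.2 x hx).1, h1 (e2.2.2 x hx).2⟩⟩
    | mk2 v par =>
      exact ⟨h1 e2.1, h3 v par (List.mem_cons_self),
        fun x hx => ⟨(e2.2.2 x hx).1, h1 (e2.2.2 x hx).2⟩⟩
    | f2 u par pend =>
      exact ⟨h2 e2.1, e2.2.1, fun x hx => ⟨(e2.2.2 x hx).1, h1 (e2.2.2 x hx).2⟩⟩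

lemma stackOK_frame {n : ℕ} {vis vis2 : Finset V} :
    ∀ {l : List Frame} {p : V}, stackOK n vis vis2 l p → ∀ F ∈ l, frameOK n vis vis2 F := by
  intro l
  induction l with
  | nil => intro p _ F hF; cases hF
  | cons G rest ih =>
    intro p hp F hF
    obtain ⟨_, h2, h3⟩ := hp
    rcases hF with _ | hF
    · exact h2
    · exact ih h3 F (by assumption)

lemma mem_f1verts {l : List Frame} {u : V} {p : Option V} {pd : List V}
    (h : Frame.f1 u p pd ∈ l) : u ∈ f1verts l := by
  unfold f1verts
  exact List.mem_filterMap.2 ⟨_, h, rfl⟩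

lemma mem_f2verts {l : List Frame} {u : V} {p : Option V} {pd : List V}
    (h : Frame.f2 u p pd ∈ l) : u ∈ f2verts l := by
  unfold f2verts
  exact List.mem_filterMap.2 ⟨_, h, rfl⟩

lemma f2only_no_f1 {l : List Frame} (h : f2only l) {u : V} {p : Option V} {pd : List V} :
    Frame.f1 u p pd ∉ l := fun hm => (h _ hm)

lemma f2only_no_mk2 {l : List Frame} (h : f2only l) {u : V} {p : Option V} :
    Frame.mk2 u p ∉ l := fun hm => (h _ hm)

lemma f2only_struct {l : List Frame} (h : f2only l) : Struct l := by
  cases l with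
  | nil => trivial
  | cons F rest =>
    have hF := h F (by simp)
    cases F with
    | f1 u p pd => cases hF
    | mk2 u p => cases hF
    | f2 u p pd => exact fun G hG => h G (by simp [hG])

lemma f2only_nmarks {l : List Frame} (h : f2only l) : nmarks l = 0 := by
  unfold nmarks
  rw [List.length_eq_zero_iff]
  rw [List.filterMap_eq_nil_iff]
  intro F hF
  have := h F hF
  cases F with
  | f1 u p pd => cases this
  | mk2 u p => cases this
  | f2 u p pd => rfl

/-- light-closure of visited set when no f1 frames remain -/
lemma closure {n k : ℕ} {w : V → V → ℕ} {σ : St} (hI : Inv n k w σ)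
    (hno : ∀ (u : V) (p : Option V) (pd : List V), Frame.f1 u p pd ∉ σ.ctrl) :
    ∀ x y, x ∈ σ.vis → Relation.ReflTransGen (light n w) x y → y ∈ σ.vis := by
  intro x y hx hr
  induction hr with
  | refl => exact hx
  | tail _ hl ih =>
    rcases hI.kinv _ ih _ hl.1 hl.2 with h | ⟨par, pend, hmem, _⟩
    · exact h
    · exact absurd hmem (hno _ _ _)

lemma uniq1_head {u : V} {p p' : Option V} {pd pd' : List V} {rest : List Frame}
    (h : (f1verts (Frame.f1 u p pd :: rest)).Nodup)
    (hm : Frame.f1 u p' pd' ∈ Frame.f1 u p pd :: rest) :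
    p' = p ∧ pd' = pd := by
  rcases List.mem_cons.1 hm with hm | hm
  · cases hm; exact ⟨rfl, rfl⟩
  · exfalso
    have h1 : u ∈ f1verts rest := mem_f1verts hm
    have : f1verts (Frame.f1 u p pd :: rest) = u :: f1verts rest := rfl
    rw [this] at h
    exact (List.nodup_cons.1 h).1 h1

lemma uniq2_head {u : V} {p p' : Option V} {pd pd' : List V} {rest : List Frame}
    (h : (f2verts (Frame.f2 u p pd :: rest)).Nodup)
    (hm : Frame.f2 u p' pd' ∈ Frame.f2 u p pd :: rest) :
    p' = p ∧ pd' = pd := by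
  rcases List.mem_cons.1 hm with hm | hm
  · cases hm; exact ⟨rfl, rfl⟩
  · exfalso
    have h1 : u ∈ f2verts rest := mem_f2verts hm
    have : f2verts (Frame.f2 u p pd :: rest) = u :: f2verts rest := rfl
    rw [this] at h
    exact (List.nodup_cons.1 h).1 h1

end Helpers

section StepEq

variable {n : ℕ} {w : V → V → ℕ} {σ : St}

lemma step_eq_nil (h : σ.ctrl = []) : step n w σ = σ := by
  unfold step; rw [h]

lemma step_eq_f1_pop_some {u x : V} {rest : List Frame}
    (h : σ.ctrl = .f1 u (some x) [] :: rest) :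
    step n w σ = { σ with walk := x :: σ.walk, ctrl := rest } := by
  unfold step; rw [h]

lemma step_eq_f1_pop_none {u : V} {rest : List Frame}
    (h : σ.ctrl = .f1 u none [] :: rest) :
    step n w σ = { σ with ctrl := rest } := by
  unfold step; rw [h]

lemma step_eq_f1_fwd {u v : V} {par : Option V} {pend' : List V} {rest : List Frame}
    (h : σ.ctrl = .f1 u par (v :: pend') :: rest) (g1 : v ∉ σ.vis) (g2 : w u v = 1) :
    step n w σ = { σ with walk := v :: σ.walk, vis := insert v σ.vis, ctrl := .f1 v (some u) (nbrs n v) :: .f1 u par pend' :: rest } := by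
  unfold step; rw [h]; simp [g1, g2]

lemma step_eq_f1_skip {u v : V} {par : Option V} {pend' : List V} {rest : List Frame}
    (h : σ.ctrl = .f1 u par (v :: pend') :: rest) (g : ¬(v ∉ σ.vis ∧ w u v = 1)) :
    step n w σ = { σ with ctrl := .f1 u par pend' :: rest } := by
  unfold step; rw [h]; simp only [if_neg g]

lemma step_eq_mk2 {v : V} {par : Option V} {rest : List Frame}
    (h : σ.ctrl = .mk2 v par :: rest) :
    step n w σ = { σ with vis2 := insert v σ.vis2, ctrl := .f2 v par (nbrs n v) :: rest } := by
  unfold step; rw [h]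

lemma step_eq_f2_pop_some {u x : V} {rest : List Frame}
    (h : σ.ctrl = .f2 u (some x) [] :: rest) :
    step n w σ = { σ with walk := x :: σ.walk, ctrl := rest } := by
  unfold step; rw [h]

lemma step_eq_f2_pop_none {u : V} {rest : List Frame}
    (h : σ.ctrl = .f2 u none [] :: rest) :
    step n w σ = { σ with ctrl := rest } := by
  unfold step; rw [h]

lemma step_eq_f2_fwd {u v : V} {par : Option V} {pend' : List V} {rest : List Frame}
    (h : σ.ctrl = .f2 u par (v :: pend') :: rest) (g1 : w u v = 1)
    (g2 : v ∈ σ.vis) (g3 : v ∉ σ.vis2) :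
    step n w σ = { σ with walk := v :: σ.walk, vis2 := insert v σ.vis2, ctrl := .f2 v (some u) (nbrs n v) :: .f2 u par pend' :: rest } := by
  unfold step; rw [h]; simp [g1, g2, g3]

lemma step_eq_f2_skip_light {u v : V} {par : Option V} {pend' : List V} {rest : List Frame}
    (h : σ.ctrl = .f2 u par (v :: pend') :: rest) (g1 : w u v = 1)
    (g2 : ¬(v ∈ σ.vis ∧ v ∉ σ.vis2)) :
    step n w σ = { σ with ctrl := .f2 u par pend' :: rest } := by
  unfold step; rw [h]; simp [g1, g2]

lemma step_eq_dive {u v : V} {par : Option V} {pend' : List V} {rest : List Frame}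
    (h : σ.ctrl = .f2 u par (v :: pend') :: rest) (g1 : w u v ≠ 1) (g2 : v ∉ σ.vis) :
    step n w σ = { σ with walk := v :: σ.walk, vis := insert v σ.vis, ds := σ.ds ++ [v], ctrl := .f1 v none (nbrs n v) :: .mk2 v (some u) :: .f2 u par pend' :: rest } := by
  unfold step; rw [h]; simp [g1, g2]

lemma step_eq_f2_skip_heavy {u v : V} {par : Option V} {pend' : List V} {rest : List Frame}
    (h : σ.ctrl = .f2 u par (v :: pend') :: rest) (g1 : w u v ≠ 1) (g2 : v ∈ σ.vis) :
    step n w σ = { σ with ctrl := .f2 u par pend' :: rest } := by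
  unfold step; rw [h]; simp [g1, g2]

end StepEq

section MoreHelpers

variable {n : ℕ} {w : V → V → ℕ}

lemma debts_cons (F : Frame) (l : List Frame) : debts w (F :: l) = fdebt w F + debts w l := by
  simp [debts]

lemma nmarks_f1 (u : V) (p : Option V) (pd : List V) (l : List Frame) :
    nmarks (.f1 u p pd :: l) = nmarks l := rfl
lemma nmarks_f2 (u : V) (p : Option V) (pd : List V) (l : List Frame) :
    nmarks (.f2 u p pd :: l) = nmarks l := rfl
lemma nmarks_mk2 (u : V) (p : Option V) (l : List Frame) :
    nmarks (.mk2 u p :: l) = nmarks l + 1 := by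
  simp [nmarks]

lemma f1verts_f1 (u : V) (p : Option V) (pd : List V) (l : List Frame) :
    f1verts (.f1 u p pd :: l) = u :: f1verts l := rfl
lemma f1verts_f2 (u : V) (p : Option V) (pd : List V) (l : List Frame) :
    f1verts (.f2 u p pd :: l) = f1verts l := rfl
lemma f1verts_mk2 (u : V) (p : Option V) (l : List Frame) :
    f1verts (.mk2 u p :: l) = f1verts l := rfl
lemma f2verts_f1 (u : V) (p : Option V) (pd : List V) (l : List Frame) :
    f2verts (.f1 u p pd :: l) = f2verts l := rfl
lemma f2verts_f2 (u : V) (p : Option V) (pd : List V) (l : List Frame) :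
    f2verts (.f2 u p pd :: l) = u :: f2verts l := rfl
lemma f2verts_mk2 (u : V) (p : Option V) (l : List Frame) :
    f2verts (.mk2 u p :: l) = f2verts l := rfl

lemma f2only_f1verts {l : List Frame} (h : f2only l) : f1verts l = [] := by
  induction l with
  | nil => rfl
  | cons F rest ih =>
    have hF := h F (by simp)
    have hr : f2only rest := fun G hG => h G (by simp [hG])
    cases F with
    | f1 u p pd => cases hF
    | mk2 u p => cases hF
    | f2 u p pd => rw [f1verts_f2]; exact ih hr

lemma f2only_nomk2 {l : List Frame} (h : f2only l) : ∀ (u : V) (q : Option V), Frame.mk2 u q ∉ l :=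
  fun u q hm => h _ hm

lemma stackOK_f1vert_mem {vis vis2 : Finset V} {l : List Frame} {p : V}
    (h : stackOK n vis vis2 l p) {u : V} (hu : u ∈ f1verts l) : u ∈ vis := by
  rcases List.mem_filterMap.1 hu with ⟨F, hF, he⟩
  have := stackOK_frame h F hF
  cases F with
  | f1 a b c => simp at he; subst he; exact this.1
  | mk2 a b => simp at he
  | f2 a b c => simp at he

lemma stackOK_f2vert_mem {vis vis2 : Finset V} {l : List Frame} {p : V}
    (h : stackOK n vis vis2 l p) {u : V} (hu : u ∈ f2verts l) : u ∈ vis2 := by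
  rcases List.mem_filterMap.1 hu with ⟨F, hF, he⟩
  have := stackOK_frame h F hF
  cases F with
  | f1 a b c => simp at he
  | mk2 a b => simp at he
  | f2 a b c => simp at he; subst he; exact this.1

/-- a step in the f2 phase: there are no f1 frames and no mk2 frames in the rest -/
lemma struct_f2_top {u : V} {p : Option V} {pd : List V} {rest : List Frame}
    (h : Struct (Frame.f2 u p pd :: rest)) : f2only rest := h

lemma no_f1_of_f2top {u : V} {p : Option V} {pd : List V} {rest : List Frame}
    (h : Struct (Frame.f2 u p pd :: rest)) :
    ∀ (a : V) (b : Option V) (c : List V), Frame.f1 a b c ∉ (Frame.f2 u p pd :: rest) := by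
  intro a b c hm
  rcases List.mem_cons.1 hm with hm | hm
  · cases hm
  · exact f2only_no_f1 (struct_f2_top h) hm

end MoreHelpers

section Preserve

variable {n k : ℕ} {w : V → V → ℕ}

lemma walk_head_eq {σ : St} (hI : Inv n k w σ) {F : Frame} {rest : List Frame}
    (h : σ.ctrl = F :: rest) : ∃ t, σ.walk = fvert F :: t := by
  cases hw : σ.walk with
  | nil => exact absurd hw hI.walk_ne
  | cons a t =>
    have sok := hI.sok
    rw [h, hw] at sok
    have ha : a = fvert F := by
      have := sok.1
      simpa using this
    exact ⟨t, by rw [ha]⟩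


lemma inv_f1_pop_some (hw : IsWeighting n k w) {σ : St} (hI : Inv n k w σ)
    {u x : V} {rest : List Frame} (h : σ.ctrl = .f1 u (some x) [] :: rest) :
    Inv n k w (step n w σ) := by
  obtain ⟨t, hwalk0⟩ := walk_head_eq hI h
  have hwalk : σ.walk = u :: t := hwalk0
  have sok := hI.sok
  rw [h] at sok
  obtain ⟨hp, hfOK, hrest⟩ := sok
  have hx : LadderAdj n u x ∧ x ∈ σ.vis := hfOK.2.2 x rfl
  rw [step_eq_f1_pop_some h]
  constructor
  case walk_ne => simp
  case chain =>
    show List.Chain' (LadderAdj n) (x :: σ.walk)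
    have hc := hI.chain
    rw [hwalk] at *
    exact List.isChain_cons_cons.2 ⟨ladderAdj_symm hx.1, hc⟩
  case wlast =>
    show (x :: σ.walk).getLast? = some start
    rw [hwalk, List.getLast?_cons_cons, ← hwalk]
    exact hI.wlast
  case vis_eq =>
    show σ.vis = (x :: σ.walk).toFinset
    rw [List.toFinset_cons, ← hI.vis_eq, Finset.insert_eq_self.2 hx.2]
  case vis2_sub => exact hI.vis2_sub
  case vis_lad => exact hI.vis_lad
  case sok =>
    show stackOK n σ.vis σ.vis2 rest ((x :: σ.walk).headD start)
    exact hrest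
  case struct =>
    have := hI.struct; rw [h] at this; exact this
  case kinv =>
    intro u' hu' v' hadj hl
    rcases hI.kinv u' hu' v' hadj hl with hv | ⟨p, pd, hm, hy⟩
    · exact Or.inl hv
    · rw [h] at hm
      rcases List.mem_cons.1 hm with hm | hm
      · cases hm; cases hy
      · exact Or.inr ⟨p, pd, hm, hy⟩
  case k2inv =>
    intro u' hu' v' hadj
    rcases hI.k2inv u' hu' v' hadj with hv | ⟨p, pd, hm, hy⟩
    · exact Or.inl hv
    · rw [h] at hm
      rcases List.mem_cons.1 hm with hm | hm
      · cases hm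
      · exact Or.inr ⟨p, pd, hm, hy⟩
  case ent =>
    intro y hy
    rcases hI.ent y hy with hv | ⟨p, hm⟩
    · exact Or.inl hv
    · rw [h] at hm
      rcases List.mem_cons.1 hm with hm | hm
      · cases hm
      · exact Or.inr ⟨p, hm⟩
  case dsvis => exact hI.dsvis
  case cmp => exact hI.cmp
  case pw => exact hI.pw
  case ledger =>
    show walkCost w (x :: σ.walk) + debts w rest + 4 ≤
      2 * σ.vis.card + 2 * (σ.vis2.card + nmarks rest) + 2 * k * σ.ds.length
    have hl := hI.ledger
    rw [h, debts_cons, nmarks_f1] at hl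
    rw [hwalk, walkCost_cons_cons, ← hwalk]
    have hfd : fdebt w (Frame.f1 u (some x) []) = w u x := rfl
    rw [hfd] at hl
    have hsym : w x u = w u x := hw.1 x u
    omega

end Preserve

section Preserve2

variable {n k : ℕ} {w : V → V → ℕ}

lemma inv_f1_pop_none (hw : IsWeighting n k w) {σ : St} (hI : Inv n k w σ)
    {u : V} {rest : List Frame} (h : σ.ctrl = .f1 u none [] :: rest) :
    Inv n k w (step n w σ) := by
  obtain ⟨t, hwalk0⟩ := walk_head_eq hI h
  have hwalk : σ.walk = u :: t := hwalk0
  have sok := hI.sok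
  rw [h] at sok
  obtain ⟨hp, hfOK, hrest⟩ := sok
  rw [step_eq_f1_pop_none h]
  constructor
  case walk_ne => exact hI.walk_ne
  case chain => exact hI.chain
  case wlast => exact hI.wlast
  case vis_eq => exact hI.vis_eq
  case vis2_sub => exact hI.vis2_sub
  case vis_lad => exact hI.vis_lad
  case sok =>
    show stackOK n σ.vis σ.vis2 rest (σ.walk.headD start)
    have : fafter (Frame.f1 u none []) = u := rfl
    rw [this] at hrest
    rw [hwalk]
    simpa using hrest
  case struct =>
    have := hI.struct; rw [h] at this; exact this
  case kinv =>
    intro u' hu' v' hadj hl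
    rcases hI.kinv u' hu' v' hadj hl with hv | ⟨p, pd, hm, hy⟩
    · exact Or.inl hv
    · rw [h] at hm
      rcases List.mem_cons.1 hm with hm | hm
      · cases hm; cases hy
      · exact Or.inr ⟨p, pd, hm, hy⟩
  case k2inv =>
    intro u' hu' v' hadj
    rcases hI.k2inv u' hu' v' hadj with hv | ⟨p, pd, hm, hy⟩
    · exact Or.inl hv
    · rw [h] at hm
      rcases List.mem_cons.1 hm with hm | hm
      · cases hm
      · exact Or.inr ⟨p, pd, hm, hy⟩
  case ent =>
    intro y hy
    rcases hI.ent y hy with hv | ⟨p, hm⟩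
    · exact Or.inl hv
    · rw [h] at hm
      rcases List.mem_cons.1 hm with hm | hm
      · cases hm
      · exact Or.inr ⟨p, hm⟩
  case dsvis => exact hI.dsvis
  case cmp => exact hI.cmp
  case pw => exact hI.pw
  case ledger =>
    show walkCost w σ.walk + debts w rest + 4 ≤
      2 * σ.vis.card + 2 * (σ.vis2.card + nmarks rest) + 2 * k * σ.ds.length
    have hl := hI.ledger
    rw [h, debts_cons, nmarks_f1] at hl
    have hfd : fdebt w (Frame.f1 u none []) = 0 := rfl
    rw [hfd] at hl
    omega

lemma inv_f2_pop_some (hw : IsWeighting n k w) {σ : St} (hI : Inv n k w σ)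
    {u x : V} {rest : List Frame} (h : σ.ctrl = .f2 u (some x) [] :: rest) :
    Inv n k w (step n w σ) := by
  obtain ⟨t, hwalk0⟩ := walk_head_eq hI h
  have hwalk : σ.walk = u :: t := hwalk0
  have sok := hI.sok
  rw [h] at sok
  obtain ⟨hp, hfOK, hrest⟩ := sok
  have hx : LadderAdj n u x ∧ x ∈ σ.vis := hfOK.2.2 x rfl
  rw [step_eq_f2_pop_some h]
  constructor
  case walk_ne => simp
  case chain =>
    show List.Chain' (LadderAdj n) (x :: σ.walk)
    have hc := hI.chain
    rw [hwalk] at *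
    exact List.isChain_cons_cons.2 ⟨ladderAdj_symm hx.1, hc⟩
  case wlast =>
    show (x :: σ.walk).getLast? = some start
    rw [hwalk, List.getLast?_cons_cons, ← hwalk]
    exact hI.wlast
  case vis_eq =>
    show σ.vis = (x :: σ.walk).toFinset
    rw [List.toFinset_cons, ← hI.vis_eq, Finset.insert_eq_self.2 hx.2]
  case vis2_sub => exact hI.vis2_sub
  case vis_lad => exact hI.vis_lad
  case sok =>
    show stackOK n σ.vis σ.vis2 rest ((x :: σ.walk).headD start)
    exact hrest
  case struct =>
    have := hI.struct; rw [h] at this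
    exact f2only_struct this
  case kinv =>
    intro u' hu' v' hadj hl
    rcases hI.kinv u' hu' v' hadj hl with hv | ⟨p, pd, hm, hy⟩
    · exact Or.inl hv
    · rw [h] at hm
      rcases List.mem_cons.1 hm with hm | hm
      · cases hm
      · exact Or.inr ⟨p, pd, hm, hy⟩
  case k2inv =>
    intro u' hu' v' hadj
    rcases hI.k2inv u' hu' v' hadj with hv | ⟨p, pd, hm, hy⟩
    · exact Or.inl hv
    · rw [h] at hm
      rcases List.mem_cons.1 hm with hm | hm
      · cases hm; cases hy
      · exact Or.inr ⟨p, pd, hm, hy⟩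
  case ent =>
    intro y hy
    rcases hI.ent y hy with hv | ⟨p, hm⟩
    · exact Or.inl hv
    · rw [h] at hm
      rcases List.mem_cons.1 hm with hm | hm
      · cases hm
      · exact Or.inr ⟨p, hm⟩
  case dsvis => exact hI.dsvis
  case cmp => exact hI.cmp
  case pw => exact hI.pw
  case ledger =>
    show walkCost w (x :: σ.walk) + debts w rest + 4 ≤
      2 * σ.vis.card + 2 * (σ.vis2.card + nmarks rest) + 2 * k * σ.ds.length
    have hl := hI.ledger
    rw [h, debts_cons, nmarks_f2] at hl
    rw [hwalk, walkCost_cons_cons, ← hwalk]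
    have hfd : fdebt w (Frame.f2 u (some x) []) = w u x := rfl
    rw [hfd] at hl
    have hsym : w x u = w u x := hw.1 x u
    omega

lemma inv_f2_pop_none (hw : IsWeighting n k w) {σ : St} (hI : Inv n k w σ)
    {u : V} {rest : List Frame} (h : σ.ctrl = .f2 u none [] :: rest) :
    Inv n k w (step n w σ) := by
  obtain ⟨t, hwalk0⟩ := walk_head_eq hI h
  have hwalk : σ.walk = u :: t := hwalk0
  have sok := hI.sok
  rw [h] at sok
  obtain ⟨hp, hfOK, hrest⟩ := sok
  rw [step_eq_f2_pop_none h]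
  constructor
  case walk_ne => exact hI.walk_ne
  case chain => exact hI.chain
  case wlast => exact hI.wlast
  case vis_eq => exact hI.vis_eq
  case vis2_sub => exact hI.vis2_sub
  case vis_lad => exact hI.vis_lad
  case sok =>
    show stackOK n σ.vis σ.vis2 rest (σ.walk.headD start)
    have : fafter (Frame.f2 u none []) = u := rfl
    rw [this] at hrest
    rw [hwalk]
    simpa using hrest
  case struct =>
    have := hI.struct; rw [h] at this
    exact f2only_struct this
  case kinv =>
    intro u' hu' v' hadj hl
    rcases hI.kinv u' hu' v' hadj hl with hv | ⟨p, pd, hm, hy⟩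
    · exact Or.inl hv
    · rw [h] at hm
      rcases List.mem_cons.1 hm with hm | hm
      · cases hm
      · exact Or.inr ⟨p, pd, hm, hy⟩
  case k2inv =>
    intro u' hu' v' hadj
    rcases hI.k2inv u' hu' v' hadj with hv | ⟨p, pd, hm, hy⟩
    · exact Or.inl hv
    · rw [h] at hm
      rcases List.mem_cons.1 hm with hm | hm
      · cases hm; cases hy
      · exact Or.inr ⟨p, pd, hm, hy⟩
  case ent =>
    intro y hy
    rcases hI.ent y hy with hv | ⟨p, hm⟩
    · exact Or.inl hv
    · rw [h] at hm
      rcases List.mem_cons.1 hm with hm | hm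
      · cases hm
      · exact Or.inr ⟨p, hm⟩
  case dsvis => exact hI.dsvis
  case cmp => exact hI.cmp
  case pw => exact hI.pw
  case ledger =>
    show walkCost w σ.walk + debts w rest + 4 ≤
      2 * σ.vis.card + 2 * (σ.vis2.card + nmarks rest) + 2 * k * σ.ds.length
    have hl := hI.ledger
    rw [h, debts_cons, nmarks_f2] at hl
    have hfd : fdebt w (Frame.f2 u none []) = 0 := rfl
    rw [hfd] at hl
    omega

end Preserve2

section Preserve3

variable {n k : ℕ} {w : V → V → ℕ}

lemma inv_f1_skip (hw : IsWeighting n k w) {σ : St} (hI : Inv n k w σ)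
    {u v : V} {par : Option V} {pend' : List V} {rest : List Frame}
    (h : σ.ctrl = .f1 u par (v :: pend') :: rest) (g : ¬(v ∉ σ.vis ∧ w u v = 1)) :
    Inv n k w (step n w σ) := by
  have sok := hI.sok
  rw [h] at sok
  obtain ⟨hp, hfOK, hrest⟩ := sok
  rw [step_eq_f1_skip h g]
  constructor
  case walk_ne => exact hI.walk_ne
  case chain => exact hI.chain
  case wlast => exact hI.wlast
  case vis_eq => exact hI.vis_eq
  case vis2_sub => exact hI.vis2_sub
  case vis_lad => exact hI.vis_lad
  case sok =>
    show stackOK n σ.vis σ.vis2 (Frame.f1 u par pend' :: rest) (σ.walk.headD start)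
    exact ⟨hp, ⟨hfOK.1, fun y hy => hfOK.2.1 y (List.mem_cons_of_mem _ hy), hfOK.2.2⟩, hrest⟩
  case struct =>
    have := hI.struct; rw [h] at this; exact this
  case kinv =>
    intro u' hu' v' hadj hl
    rcases hI.kinv u' hu' v' hadj hl with hv | ⟨p, pd, hm, hy⟩
    · exact Or.inl hv
    · rw [h] at hm
      rcases List.mem_cons.1 hm with hm | hm
      · cases hm
        rcases List.mem_cons.1 hy with hy | hy
        · subst hy
          rcases not_and_or.1 g with hg | hg
          · exact Or.inl (not_not.1 hg)
          · exact absurd hl hg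
        · exact Or.inr ⟨par, pend', List.mem_cons_self, hy⟩
      · exact Or.inr ⟨p, pd, List.mem_cons_of_mem _ hm, hy⟩
  case k2inv =>
    intro u' hu' v' hadj
    rcases hI.k2inv u' hu' v' hadj with hv | ⟨p, pd, hm, hy⟩
    · exact Or.inl hv
    · rw [h] at hm
      rcases List.mem_cons.1 hm with hm | hm
      · cases hm
      · exact Or.inr ⟨p, pd, List.mem_cons_of_mem _ hm, hy⟩
  case ent =>
    intro y hy
    rcases hI.ent y hy with hv | ⟨p, hm⟩
    · exact Or.inl hv
    · rw [h] at hm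
      rcases List.mem_cons.1 hm with hm | hm
      · cases hm
      · exact Or.inr ⟨p, List.mem_cons_of_mem _ hm⟩
  case dsvis => exact hI.dsvis
  case cmp => exact hI.cmp
  case pw => exact hI.pw
  case ledger =>
    show walkCost w σ.walk + debts w (Frame.f1 u par pend' :: rest) + 4 ≤
      2 * σ.vis.card + 2 * (σ.vis2.card + nmarks (Frame.f1 u par pend' :: rest)) +
        2 * k * σ.ds.length
    have hl := hI.ledger
    rw [h, debts_cons, nmarks_f1] at hl
    rw [debts_cons, nmarks_f1]
    have : fdebt w (Frame.f1 u par pend') = fdebt w (Frame.f1 u par (v :: pend')) := rfl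
    omega

lemma inv_f2_skip_light (hw : IsWeighting n k w) {σ : St} (hI : Inv n k w σ)
    {u v : V} {par : Option V} {pend' : List V} {rest : List Frame}
    (h : σ.ctrl = .f2 u par (v :: pend') :: rest) (g1 : w u v = 1)
    (g2 : ¬(v ∈ σ.vis ∧ v ∉ σ.vis2)) :
    Inv n k w (step n w σ) := by
  have sok := hI.sok
  rw [h] at sok
  obtain ⟨hp, hfOK, hrest⟩ := sok
  have hstruct := hI.struct
  rw [h] at hstruct
  have hnof1 : ∀ (a : V) (b : Option V) (c : List V), Frame.f1 a b c ∉ σ.ctrl := by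
    rw [h]; exact no_f1_of_f2top hstruct
  have hadjuv : LadderAdj n u v := mem_nbrs_adj (hfOK.2.1 v (List.mem_cons_self))
  have hu_vis : u ∈ σ.vis := hI.vis2_sub hfOK.1
  have hv_vis : v ∈ σ.vis := by
    rcases hI.kinv u hu_vis v hadjuv g1 with hv | ⟨p, pd, hm, _⟩
    · exact hv
    · exact absurd hm (hnof1 _ _ _)
  have hv2 : v ∈ σ.vis2 := by
    by_contra hc
    exact g2 ⟨hv_vis, hc⟩
  rw [step_eq_f2_skip_light h g1 g2]
  constructor
  case walk_ne => exact hI.walk_ne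
  case chain => exact hI.chain
  case wlast => exact hI.wlast
  case vis_eq => exact hI.vis_eq
  case vis2_sub => exact hI.vis2_sub
  case vis_lad => exact hI.vis_lad
  case sok =>
    show stackOK n σ.vis σ.vis2 (Frame.f2 u par pend' :: rest) (σ.walk.headD start)
    exact ⟨hp, ⟨hfOK.1, fun y hy => hfOK.2.1 y (List.mem_cons_of_mem _ hy), hfOK.2.2⟩, hrest⟩
  case struct =>
    exact struct_f2_top hstruct
  case kinv =>
    intro u' hu' v' hadj hl
    rcases hI.kinv u' hu' v' hadj hl with hv | ⟨p, pd, hm, hy⟩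
    · exact Or.inl hv
    · exact absurd hm (hnof1 _ _ _)
  case k2inv =>
    intro u' hu' v' hadj
    rcases hI.k2inv u' hu' v' hadj with hv | ⟨p, pd, hm, hy⟩
    · exact Or.inl hv
    · rw [h] at hm
      rcases List.mem_cons.1 hm with hm | hm
      · cases hm
        rcases List.mem_cons.1 hy with hy | hy
        · subst hy
          exact Or.inl ⟨hv_vis, fun _ => hv2⟩
        · exact Or.inr ⟨par, pend', List.mem_cons_self, hy⟩
      · exact Or.inr ⟨p, pd, List.mem_cons_of_mem _ hm, hy⟩
  case ent =>
    intro y hy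
    rcases hI.ent y hy with hv | ⟨p, hm⟩
    · exact Or.inl hv
    · rw [h] at hm
      rcases List.mem_cons.1 hm with hm | hm
      · cases hm
      · exact Or.inr ⟨p, List.mem_cons_of_mem _ hm⟩
  case dsvis => exact hI.dsvis
  case cmp => exact hI.cmp
  case pw => exact hI.pw
  case ledger =>
    show walkCost w σ.walk + debts w (Frame.f2 u par pend' :: rest) + 4 ≤
      2 * σ.vis.card + 2 * (σ.vis2.card + nmarks (Frame.f2 u par pend' :: rest)) +
        2 * k * σ.ds.length
    have hl := hI.ledger
    rw [h, debts_cons, nmarks_f2] at hl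
    rw [debts_cons, nmarks_f2]
    have : fdebt w (Frame.f2 u par pend') = fdebt w (Frame.f2 u par (v :: pend')) := rfl
    omega

lemma inv_f2_skip_heavy (hw : IsWeighting n k w) {σ : St} (hI : Inv n k w σ)
    {u v : V} {par : Option V} {pend' : List V} {rest : List Frame}
    (h : σ.ctrl = .f2 u par (v :: pend') :: rest) (g1 : w u v ≠ 1) (g2 : v ∈ σ.vis) :
    Inv n k w (step n w σ) := by
  have sok := hI.sok
  rw [h] at sok
  obtain ⟨hp, hfOK, hrest⟩ := sok
  have hstruct := hI.struct
  rw [h] at hstruct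
  have hnof1 : ∀ (a : V) (b : Option V) (c : List V), Frame.f1 a b c ∉ σ.ctrl := by
    rw [h]; exact no_f1_of_f2top hstruct
  rw [step_eq_f2_skip_heavy h g1 g2]
  constructor
  case walk_ne => exact hI.walk_ne
  case chain => exact hI.chain
  case wlast => exact hI.wlast
  case vis_eq => exact hI.vis_eq
  case vis2_sub => exact hI.vis2_sub
  case vis_lad => exact hI.vis_lad
  case sok =>
    show stackOK n σ.vis σ.vis2 (Frame.f2 u par pend' :: rest) (σ.walk.headD start)
    exact ⟨hp, ⟨hfOK.1, fun y hy => hfOK.2.1 y (List.mem_cons_of_mem _ hy), hfOK.2.2⟩, hrest⟩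
  case struct =>
    exact struct_f2_top hstruct
  case kinv =>
    intro u' hu' v' hadj hl
    rcases hI.kinv u' hu' v' hadj hl with hv | ⟨p, pd, hm, hy⟩
    · exact Or.inl hv
    · exact absurd hm (hnof1 _ _ _)
  case k2inv =>
    intro u' hu' v' hadj
    rcases hI.k2inv u' hu' v' hadj with hv | ⟨p, pd, hm, hy⟩
    · exact Or.inl hv
    · rw [h] at hm
      rcases List.mem_cons.1 hm with hm | hm
      · cases hm
        rcases List.mem_cons.1 hy with hy | hy
        · subst hy
          exact Or.inl ⟨g2, fun hc => absurd hc g1⟩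
        · exact Or.inr ⟨par, pend', List.mem_cons_self, hy⟩
      · exact Or.inr ⟨p, pd, List.mem_cons_of_mem _ hm, hy⟩
  case ent =>
    intro y hy
    rcases hI.ent y hy with hv | ⟨p, hm⟩
    · exact Or.inl hv
    · rw [h] at hm
      rcases List.mem_cons.1 hm with hm | hm
      · cases hm
      · exact Or.inr ⟨p, List.mem_cons_of_mem _ hm⟩
  case dsvis => exact hI.dsvis
  case cmp => exact hI.cmp
  case pw => exact hI.pw
  case ledger =>
    show walkCost w σ.walk + debts w (Frame.f2 u par pend' :: rest) + 4 ≤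
      2 * σ.vis.card + 2 * (σ.vis2.card + nmarks (Frame.f2 u par pend' :: rest)) +
        2 * k * σ.ds.length
    have hl := hI.ledger
    rw [h, debts_cons, nmarks_f2] at hl
    rw [debts_cons, nmarks_f2]
    have : fdebt w (Frame.f2 u par pend') = fdebt w (Frame.f2 u par (v :: pend')) := rfl
    omega

end Preserve3

section Preserve4

variable {n k : ℕ} {w : V → V → ℕ}

lemma inv_mk2 (hw : IsWeighting n k w) {σ : St} (hI : Inv n k w σ)
    {v : V} {par : Option V} {rest : List Frame}
    (h : σ.ctrl = .mk2 v par :: rest) :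
    Inv n k w (step n w σ) := by
  have sok := hI.sok
  rw [h] at sok
  obtain ⟨hp, hfOK, hrest⟩ := sok
  have hstruct := hI.struct
  rw [h] at hstruct
  have hf2only : f2only rest := hstruct
  rw [step_eq_mk2 h]
  constructor
  case walk_ne => exact hI.walk_ne
  case chain => exact hI.chain
  case wlast => exact hI.wlast
  case vis_eq => exact hI.vis_eq
  case vis2_sub =>
    intro y hy
    rcases Finset.mem_insert.1 hy with hy | hy
    · subst hy; exact hfOK.1
    · exact hI.vis2_sub hy
  case vis_lad => exact hI.vis_lad
  case sok =>
    show stackOK n σ.vis (insert v σ.vis2) (Frame.f2 v par (nbrs n v) :: rest) (σ.walk.headD start)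
    refine ⟨hp, ⟨Finset.mem_insert_self _ _, fun y hy => hy, fun x hx => hfOK.2.2 x hx⟩, ?_⟩
    exact stackOK_mono (le_refl _) (Finset.subset_insert _ _) rest _
      (fun a b hm => absurd (hf2only _ hm) (by simp [isF2])) hrest
  case struct =>
    show Struct (Frame.f2 v par (nbrs n v) :: rest)
    exact hf2only
  case kinv =>
    intro u' hu' v' hadj hl
    rcases hI.kinv u' hu' v' hadj hl with hv | ⟨p, pd, hm, hy⟩
    · exact Or.inl hv
    · rw [h] at hm
      rcases List.mem_cons.1 hm with hm | hm
      · cases hm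
      · exact Or.inr ⟨p, pd, List.mem_cons_of_mem _ hm, hy⟩
  case k2inv =>
    intro u' hu' v' hadj
    rcases Finset.mem_insert.1 hu' with hu' | hu'
    · subst hu'
      exact Or.inr ⟨par, nbrs n u', List.mem_cons_self, adj_mem_nbrs hadj⟩
    · rcases hI.k2inv u' hu' v' hadj with hv | ⟨p, pd, hm, hy⟩
      · exact Or.inl ⟨hv.1, fun hl => Finset.mem_insert_of_mem (hv.2 hl)⟩
      · rw [h] at hm
        rcases List.mem_cons.1 hm with hm | hm
        · cases hm
        · exact Or.inr ⟨p, pd, List.mem_cons_of_mem _ hm, hy⟩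
  case ent =>
    intro y hy
    rcases hI.ent y hy with hv | ⟨p, hm⟩
    · exact Or.inl (Finset.mem_insert_of_mem hv)
    · rw [h] at hm
      rcases List.mem_cons.1 hm with hm | hm
      · cases hm; exact Or.inl (Finset.mem_insert_self _ _)
      · exact Or.inr ⟨p, List.mem_cons_of_mem _ hm⟩
  case dsvis => exact hI.dsvis
  case cmp => exact hI.cmp
  case pw => exact hI.pw
  case ledger =>
    show walkCost w σ.walk + debts w (Frame.f2 v par (nbrs n v) :: rest) + 4 ≤
      2 * σ.vis.card + 2 * ((insert v σ.vis2).card + nmarks (Frame.f2 v par (nbrs n v) :: rest)) +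
        2 * k * σ.ds.length
    have hl := hI.ledger
    rw [h, debts_cons, nmarks_mk2] at hl
    rw [debts_cons, nmarks_f2, Finset.card_insert_of_notMem hfOK.2.1]
    have hde : fdebt w (Frame.f2 v par (nbrs n v)) = fdebt w (Frame.mk2 v par) := by
      cases par <;> rfl
    omega

lemma inv_f1_fwd (hw : IsWeighting n k w) {σ : St} (hI : Inv n k w σ)
    {u v : V} {par : Option V} {pend' : List V} {rest : List Frame}
    (h : σ.ctrl = .f1 u par (v :: pend') :: rest) (g1 : v ∉ σ.vis) (g2 : w u v = 1) :
    Inv n k w (step n w σ) := by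
  obtain ⟨t, hwalk0⟩ := walk_head_eq hI h
  have hwalk : σ.walk = u :: t := hwalk0
  have sok := hI.sok
  rw [h] at sok
  obtain ⟨hp, hfOK, hrest⟩ := sok
  have hadjuv : LadderAdj n u v := mem_nbrs_adj (hfOK.2.1 v (List.mem_cons_self))
  rw [step_eq_f1_fwd h g1 g2]
  constructor
  case walk_ne => simp
  case chain =>
    show List.Chain' (LadderAdj n) (v :: σ.walk)
    have hc := hI.chain
    rw [hwalk] at *
    exact List.isChain_cons_cons.2 ⟨ladderAdj_symm hadjuv, hc⟩
  case wlast =>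
    show (v :: σ.walk).getLast? = some start
    rw [hwalk, List.getLast?_cons_cons, ← hwalk]
    exact hI.wlast
  case vis_eq =>
    show insert v σ.vis = (v :: σ.walk).toFinset
    rw [List.toFinset_cons, ← hI.vis_eq]
  case vis2_sub =>
    exact le_trans hI.vis2_sub (Finset.subset_insert _ _)
  case vis_lad =>
    intro y hy
    rcases Finset.mem_insert.1 hy with hy | hy
    · subst hy; exact hadjuv.2.1
    · exact hI.vis_lad y hy
  case sok =>
    show stackOK n (insert v σ.vis) σ.vis2
      (Frame.f1 v (some u) (nbrs n v) :: Frame.f1 u par pend' :: rest)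
      ((v :: σ.walk).headD start)
    refine ⟨rfl, ⟨Finset.mem_insert_self _ _, fun y hy => hy,
      fun x hx => by cases hx; exact ⟨ladderAdj_symm hadjuv, Finset.mem_insert_of_mem hfOK.1⟩⟩, ?_⟩
    refine ⟨rfl, ⟨Finset.mem_insert_of_mem hfOK.1,
      fun y hy => hfOK.2.1 y (List.mem_cons_of_mem _ hy),
      fun x hx => ⟨(hfOK.2.2 x hx).1, Finset.mem_insert_of_mem (hfOK.2.2 x hx).2⟩⟩, ?_⟩
    refine stackOK_mono (Finset.subset_insert _ _) (le_refl _) rest _ ?_ hrest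
    intro a b hm
    exact (stackOK_frame hrest _ hm).2.1
  case struct =>
    have := hI.struct; rw [h] at this; exact this
  case kinv =>
    intro u' hu' v' hadj hl
    rcases Finset.mem_insert.1 hu' with hu' | hu'
    · subst hu'
      exact Or.inr ⟨some u, nbrs n u', List.mem_cons_self, adj_mem_nbrs hadj⟩
    · rcases hI.kinv u' hu' v' hadj hl with hv | ⟨p, pd, hm, hy⟩
      · exact Or.inl (Finset.mem_insert_of_mem hv)
      · rw [h] at hm
        rcases List.mem_cons.1 hm with hm | hm
        · cases hm
          rcases List.mem_cons.1 hy with hy | hy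
          · subst hy; exact Or.inl (Finset.mem_insert_self _ _)
          · exact Or.inr ⟨par, pend', List.mem_cons_of_mem _ (List.mem_cons_self), hy⟩
        · exact Or.inr ⟨p, pd, List.mem_cons_of_mem _ (List.mem_cons_of_mem _ hm), hy⟩
  case k2inv =>
    intro u' hu' v' hadj
    rcases hI.k2inv u' hu' v' hadj with hv | ⟨p, pd, hm, hy⟩
    · exact Or.inl ⟨Finset.mem_insert_of_mem hv.1, hv.2⟩
    · rw [h] at hm
      rcases List.mem_cons.1 hm with hm | hm
      · cases hm
      · exact Or.inr ⟨p, pd, List.mem_cons_of_mem _ (List.mem_cons_of_mem _ hm), hy⟩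
  case ent =>
    intro y hy
    rcases hI.ent y hy with hv | ⟨p, hm⟩
    · exact Or.inl hv
    · rw [h] at hm
      rcases List.mem_cons.1 hm with hm | hm
      · cases hm
      · exact Or.inr ⟨p, List.mem_cons_of_mem _ (List.mem_cons_of_mem _ hm)⟩
  case dsvis =>
    intro y hy
    exact Finset.mem_insert_of_mem (hI.dsvis y hy)
  case cmp =>
    intro u' hu'
    rcases Finset.mem_insert.1 hu' with hu' | hu'
    · subst hu'
      obtain ⟨x, hx, hr⟩ := hI.cmp u hfOK.1
      exact ⟨x, hx, hr.tail ⟨hadjuv, g2⟩⟩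
    · obtain ⟨x, hx, hr⟩ := hI.cmp u' hu'
      exact ⟨x, hx, hr⟩
  case pw => exact hI.pw
  case ledger =>
    show walkCost w (v :: σ.walk) +
      debts w (Frame.f1 v (some u) (nbrs n v) :: Frame.f1 u par pend' :: rest) + 4 ≤
      2 * (insert v σ.vis).card +
        2 * (σ.vis2.card + nmarks (Frame.f1 v (some u) (nbrs n v) :: Frame.f1 u par pend' :: rest)) +
        2 * k * σ.ds.length
    have hl := hI.ledger
    rw [h, debts_cons, nmarks_f1] at hl
    rw [debts_cons, debts_cons, nmarks_f1, nmarks_f1, Finset.card_insert_of_notMem g1]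
    rw [hwalk, walkCost_cons_cons, ← hwalk]
    have hd1 : fdebt w (Frame.f1 v (some u) (nbrs n v)) = w v u := rfl
    have hd2 : fdebt w (Frame.f1 u par pend') = fdebt w (Frame.f1 u par (v :: pend')) := rfl
    have hsym : w v u = w u v := hw.1 v u
    rw [hd1, hd2, hsym, g2]
    omega

lemma inv_f2_fwd (hw : IsWeighting n k w) {σ : St} (hI : Inv n k w σ)
    {u v : V} {par : Option V} {pend' : List V} {rest : List Frame}
    (h : σ.ctrl = .f2 u par (v :: pend') :: rest) (g1 : w u v = 1)
    (g2 : v ∈ σ.vis) (g3 : v ∉ σ.vis2) :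
    Inv n k w (step n w σ) := by
  obtain ⟨t, hwalk0⟩ := walk_head_eq hI h
  have hwalk : σ.walk = u :: t := hwalk0
  have sok := hI.sok
  rw [h] at sok
  obtain ⟨hp, hfOK, hrest⟩ := sok
  have hstruct := hI.struct
  rw [h] at hstruct
  have hf2only : f2only rest := struct_f2_top hstruct
  have hnof1 : ∀ (a : V) (b : Option V) (c : List V), Frame.f1 a b c ∉ σ.ctrl := by
    rw [h]; exact no_f1_of_f2top hstruct
  have hadjuv : LadderAdj n u v := mem_nbrs_adj (hfOK.2.1 v (List.mem_cons_self))
  rw [step_eq_f2_fwd h g1 g2 g3]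
  constructor
  case walk_ne => simp
  case chain =>
    show List.Chain' (LadderAdj n) (v :: σ.walk)
    have hc := hI.chain
    rw [hwalk] at *
    exact List.isChain_cons_cons.2 ⟨ladderAdj_symm hadjuv, hc⟩
  case wlast =>
    show (v :: σ.walk).getLast? = some start
    rw [hwalk, List.getLast?_cons_cons, ← hwalk]
    exact hI.wlast
  case vis_eq =>
    show σ.vis = (v :: σ.walk).toFinset
    rw [List.toFinset_cons, ← hI.vis_eq, Finset.insert_eq_self.2 g2]
  case vis2_sub =>
    intro y hy
    rcases Finset.mem_insert.1 hy with hy | hy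
    · subst hy; exact g2
    · exact hI.vis2_sub hy
  case vis_lad => exact hI.vis_lad
  case sok =>
    show stackOK n σ.vis (insert v σ.vis2)
      (Frame.f2 v (some u) (nbrs n v) :: Frame.f2 u par pend' :: rest)
      ((v :: σ.walk).headD start)
    refine ⟨rfl, ⟨Finset.mem_insert_self _ _, fun y hy => hy,
      fun x hx => by cases hx; exact ⟨ladderAdj_symm hadjuv, hI.vis2_sub hfOK.1⟩⟩, ?_⟩
    refine ⟨rfl, ⟨Finset.mem_insert_of_mem hfOK.1,
      fun y hy => hfOK.2.1 y (List.mem_cons_of_mem _ hy), hfOK.2.2⟩, ?_⟩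
    refine stackOK_mono (le_refl _) (Finset.subset_insert _ _) rest _ ?_ hrest
    intro a b hm
    exact absurd (hf2only _ hm) (by simp [isF2])
  case struct =>
    show Struct (Frame.f2 v (some u) (nbrs n v) :: Frame.f2 u par pend' :: rest)
    intro F hF
    rcases List.mem_cons.1 hF with hF | hF
    · subst hF; trivial
    · exact hf2only F hF
  case kinv =>
    intro u' hu' v' hadj hl
    rcases hI.kinv u' hu' v' hadj hl with hv | ⟨p, pd, hm, hy⟩
    · exact Or.inl hv
    · exact absurd hm (hnof1 _ _ _)
  case k2inv =>
    intro u' hu' v' hadj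
    rcases Finset.mem_insert.1 hu' with hu' | hu'
    · subst hu'
      exact Or.inr ⟨some u, nbrs n u', List.mem_cons_self, adj_mem_nbrs hadj⟩
    · rcases hI.k2inv u' hu' v' hadj with hv | ⟨p, pd, hm, hy⟩
      · exact Or.inl ⟨hv.1, fun hl => Finset.mem_insert_of_mem (hv.2 hl)⟩
      · rw [h] at hm
        rcases List.mem_cons.1 hm with hm | hm
        · cases hm
          rcases List.mem_cons.1 hy with hy | hy
          · subst hy
            exact Or.inl ⟨g2, fun _ => Finset.mem_insert_self _ _⟩
          · exact Or.inr ⟨par, pend', List.mem_cons_of_mem _ (List.mem_cons_self), hy⟩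
        · exact Or.inr ⟨p, pd, List.mem_cons_of_mem _ (List.mem_cons_of_mem _ hm), hy⟩
  case ent =>
    intro y hy
    rcases hI.ent y hy with hv | ⟨p, hm⟩
    · exact Or.inl (Finset.mem_insert_of_mem hv)
    · rw [h] at hm
      rcases List.mem_cons.1 hm with hm | hm
      · cases hm
      · exact Or.inr ⟨p, List.mem_cons_of_mem _ (List.mem_cons_of_mem _ hm)⟩
  case dsvis => exact hI.dsvis
  case cmp => exact hI.cmp
  case pw => exact hI.pw
  case ledger =>
    show walkCost w (v :: σ.walk) +
      debts w (Frame.f2 v (some u) (nbrs n v) :: Frame.f2 u par pend' :: rest) + 4 ≤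
      2 * σ.vis.card +
        2 * ((insert v σ.vis2).card +
          nmarks (Frame.f2 v (some u) (nbrs n v) :: Frame.f2 u par pend' :: rest)) +
        2 * k * σ.ds.length
    have hl := hI.ledger
    rw [h, debts_cons, nmarks_f2] at hl
    rw [debts_cons, debts_cons, nmarks_f2, nmarks_f2, Finset.card_insert_of_notMem g3]
    rw [hwalk, walkCost_cons_cons, ← hwalk]
    have hd1 : fdebt w (Frame.f2 v (some u) (nbrs n v)) = w v u := rfl
    have hd2 : fdebt w (Frame.f2 u par pend') = fdebt w (Frame.f2 u par (v :: pend')) := rfl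
    have hsym : w v u = w u v := hw.1 v u
    rw [hd1, hd2, hsym, g1]
    omega

lemma inv_dive (hw : IsWeighting n k w) {σ : St} (hI : Inv n k w σ)
    {u v : V} {par : Option V} {pend' : List V} {rest : List Frame}
    (h : σ.ctrl = .f2 u par (v :: pend') :: rest) (g1 : w u v ≠ 1) (g2 : v ∉ σ.vis) :
    Inv n k w (step n w σ) := by
  obtain ⟨t, hwalk0⟩ := walk_head_eq hI h
  have hwalk : σ.walk = u :: t := hwalk0
  have sok := hI.sok
  rw [h] at sok
  obtain ⟨hp, hfOK, hrest⟩ := sok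
  have hstruct := hI.struct
  rw [h] at hstruct
  have hf2only : f2only rest := struct_f2_top hstruct
  have hnof1 : ∀ (a : V) (b : Option V) (c : List V), Frame.f1 a b c ∉ σ.ctrl := by
    rw [h]; exact no_f1_of_f2top hstruct
  have hadjuv : LadderAdj n u v := mem_nbrs_adj (hfOK.2.1 v (List.mem_cons_self))
  have hwk : w u v = k := by
    rcases hw.2 u v hadjuv with h1 | h1
    · exact absurd h1 g1
    · exact h1
  have hclosed := closure hI hnof1
  rw [step_eq_dive h g1 g2]
  constructor
  case walk_ne => simp
  case chain =>
    show List.Chain' (LadderAdj n) (v :: σ.walk)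
    have hc := hI.chain
    rw [hwalk] at *
    exact List.isChain_cons_cons.2 ⟨ladderAdj_symm hadjuv, hc⟩
  case wlast =>
    show (v :: σ.walk).getLast? = some start
    rw [hwalk, List.getLast?_cons_cons, ← hwalk]
    exact hI.wlast
  case vis_eq =>
    show insert v σ.vis = (v :: σ.walk).toFinset
    rw [List.toFinset_cons, ← hI.vis_eq]
  case vis2_sub =>
    exact le_trans hI.vis2_sub (Finset.subset_insert _ _)
  case vis_lad =>
    intro y hy
    rcases Finset.mem_insert.1 hy with hy | hy
    · subst hy; exact hadjuv.2.1
    · exact hI.vis_lad y hy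
  case sok =>
    show stackOK n (insert v σ.vis) σ.vis2
      (Frame.f1 v none (nbrs n v) :: Frame.mk2 v (some u) :: Frame.f2 u par pend' :: rest)
      ((v :: σ.walk).headD start)
    refine ⟨rfl, ⟨Finset.mem_insert_self _ _, fun y hy => hy, fun x hx => by cases hx⟩, ?_⟩
    refine ⟨rfl, ⟨Finset.mem_insert_self _ _, fun hc => g2 (hI.vis2_sub hc),
      fun x hx => by cases hx; exact ⟨ladderAdj_symm hadjuv, Finset.mem_insert_of_mem (hI.vis2_sub hfOK.1)⟩⟩, ?_⟩
    refine ⟨rfl, ⟨hfOK.1, fun y hy => hfOK.2.1 y (List.mem_cons_of_mem _ hy),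
      fun x hx => ⟨(hfOK.2.2 x hx).1, Finset.mem_insert_of_mem (hfOK.2.2 x hx).2⟩⟩, ?_⟩
    refine stackOK_mono (Finset.subset_insert _ _) (le_refl _) rest _ ?_ hrest
    intro a b hm
    exact absurd (hf2only _ hm) (by simp [isF2])
  case struct =>
    show Struct (Frame.f1 v none (nbrs n v) :: Frame.mk2 v (some u) :: Frame.f2 u par pend' :: rest)
    show f2only (Frame.f2 u par pend' :: rest)
    intro F hF
    rcases List.mem_cons.1 hF with hF | hF
    · subst hF; trivial
    · exact hf2only F hF
  case kinv =>
    intro u' hu' v' hadj hl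
    rcases Finset.mem_insert.1 hu' with hu' | hu'
    · subst hu'
      exact Or.inr ⟨none, nbrs n u', List.mem_cons_self, adj_mem_nbrs hadj⟩
    · rcases hI.kinv u' hu' v' hadj hl with hv | ⟨p, pd, hm, hy⟩
      · exact Or.inl (Finset.mem_insert_of_mem hv)
      · exact absurd hm (hnof1 _ _ _)
  case k2inv =>
    intro u' hu' v' hadj
    rcases hI.k2inv u' hu' v' hadj with hv | ⟨p, pd, hm, hy⟩
    · exact Or.inl ⟨Finset.mem_insert_of_mem hv.1, hv.2⟩
    · rw [h] at hm
      rcases List.mem_cons.1 hm with hm | hm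
      · cases hm
        rcases List.mem_cons.1 hy with hy | hy
        · subst hy
          exact Or.inl ⟨Finset.mem_insert_self _ _, fun hc => absurd hc g1⟩
        · exact Or.inr ⟨par, pend',
            List.mem_cons_of_mem _ (List.mem_cons_of_mem _ (List.mem_cons_self)), hy⟩
      · exact Or.inr ⟨p, pd,
          List.mem_cons_of_mem _ (List.mem_cons_of_mem _ (List.mem_cons_of_mem _ hm)), hy⟩
  case ent =>
    intro y hy
    have hy' : y ∈ (start :: σ.ds) ∨ y = v := by
      rcases List.mem_cons.1 hy with hy | hy
      · exact Or.inl (List.mem_cons.2 (Or.inl hy))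
      · rcases List.mem_append.1 hy with hy | hy
        · exact Or.inl (List.mem_cons.2 (Or.inr hy))
        · exact Or.inr (List.mem_singleton.1 hy)
    rcases hy' with hy' | hy'
    · rcases hI.ent y hy' with hv | ⟨p, hm⟩
      · exact Or.inl hv
      · rw [h] at hm
        rcases List.mem_cons.1 hm with hm | hm
        · cases hm
        · exact Or.inr ⟨p,
            List.mem_cons_of_mem _ (List.mem_cons_of_mem _ (List.mem_cons_of_mem _ hm))⟩
    · subst hy'
      exact Or.inr ⟨some u, List.mem_cons_of_mem _ (List.mem_cons_self)⟩
  case dsvis =>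
    intro y hy
    have hy' : y ∈ (start :: σ.ds) ∨ y = v := by
      rcases List.mem_cons.1 hy with hy | hy
      · exact Or.inl (List.mem_cons.2 (Or.inl hy))
      · rcases List.mem_append.1 hy with hy | hy
        · exact Or.inl (List.mem_cons.2 (Or.inr hy))
        · exact Or.inr (List.mem_singleton.1 hy)
    rcases hy' with hy' | hy'
    · exact Finset.mem_insert_of_mem (hI.dsvis y hy')
    · subst hy'; exact Finset.mem_insert_self _ _
  case cmp =>
    intro u' hu'
    rcases Finset.mem_insert.1 hu' with hu' | hu'
    · subst hu'
      refine ⟨u', ?_, Relation.ReflTransGen.refl⟩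
      exact List.mem_cons.2 (Or.inr (List.mem_append.2 (Or.inr (List.mem_singleton.2 rfl))))
    · obtain ⟨x, hx, hr⟩ := hI.cmp u' hu'
      refine ⟨x, ?_, hr⟩
      rcases List.mem_cons.1 hx with hx | hx
      · exact List.mem_cons.2 (Or.inl hx)
      · exact List.mem_cons.2 (Or.inr (List.mem_append.2 (Or.inl hx)))
  case pw =>
    show (start :: (σ.ds ++ [v])).Pairwise _
    have hre : (start :: (σ.ds ++ [v])) = (start :: σ.ds) ++ [v] := by simp
    rw [hre]
    rw [List.pairwise_append]
    refine ⟨hI.pw, List.pairwise_singleton _ _, ?_⟩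
    intro x hx y hy
    rw [List.mem_singleton.1 hy]
    intro hr
    exact g2 (hclosed x v (hI.dsvis x hx) hr)
  case ledger =>
    show walkCost w (v :: σ.walk) +
      debts w (Frame.f1 v none (nbrs n v) :: Frame.mk2 v (some u) :: Frame.f2 u par pend' :: rest)
        + 4 ≤
      2 * (insert v σ.vis).card +
        2 * (σ.vis2.card +
          nmarks (Frame.f1 v none (nbrs n v) :: Frame.mk2 v (some u) :: Frame.f2 u par pend' :: rest)) +
        2 * k * (σ.ds ++ [v]).length
    have hl := hI.ledger
    rw [h, debts_cons, nmarks_f2] at hl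
    rw [debts_cons, debts_cons, debts_cons, nmarks_f1, nmarks_mk2, nmarks_f2,
      Finset.card_insert_of_notMem g2, List.length_append]
    rw [hwalk, walkCost_cons_cons, ← hwalk]
    have hd0 : fdebt w (Frame.f1 v none (nbrs n v)) = 0 := rfl
    have hd1 : fdebt w (Frame.mk2 v (some u)) = w v u := rfl
    have hd2 : fdebt w (Frame.f2 u par pend') = fdebt w (Frame.f2 u par (v :: pend')) := rfl
    have hsym : w v u = w u v := hw.1 v u
    rw [hd0, hd1, hd2, hsym, hwk]
    simp only [List.length_singleton]
    have hexp : 2 * k * (σ.ds.length + 1) = 2 * k * σ.ds.length + 2 * k := by ring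
    omega

end Preserve4

section Master

variable {n k : ℕ} {w : V → V → ℕ}

lemma inv_step (hw : IsWeighting n k w) {σ : St} (hI : Inv n k w σ) :
    Inv n k w (step n w σ) := by
  rcases hc : σ.ctrl with _ | ⟨F, rest⟩
  · rw [step_eq_nil hc]; exact hI
  · cases F with
    | f1 u par pend =>
      cases pend with
      | nil =>
        cases par with
        | some x => exact inv_f1_pop_some hw hI hc
        | none => exact inv_f1_pop_none hw hI hc
      | cons v pend' =>
        by_cases g : v ∉ σ.vis ∧ w u v = 1
        · exact inv_f1_fwd hw hI hc g.1 g.2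
        · exact inv_f1_skip hw hI hc g
    | mk2 v par => exact inv_mk2 hw hI hc
    | f2 u par pend =>
      cases pend with
      | nil =>
        cases par with
        | some x => exact inv_f2_pop_some hw hI hc
        | none => exact inv_f2_pop_none hw hI hc
      | cons v pend' =>
        by_cases g1 : w u v = 1
        · by_cases g2 : v ∈ σ.vis ∧ v ∉ σ.vis2
          · exact inv_f2_fwd hw hI hc g1 g2.1 g2.2
          · exact inv_f2_skip_light hw hI hc g1 g2
        · by_cases g2 : v ∈ σ.vis
          · exact inv_f2_skip_heavy hw hI hc g1 g2
          · exact inv_dive hw hI hc g1 g2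

/-- the ladder vertex set as a Finset -/
def ladderF (n : ℕ) : Finset V := ({1, 2} : Finset ℕ) ×ˢ Finset.Icc 1 n

lemma mem_ladderF {n : ℕ} {v : V} (h : InLadder n v) : v ∈ ladderF n := by
  obtain ⟨h1, h2, h3⟩ := h
  unfold ladderF
  rw [Finset.mem_product]
  constructor
  · rcases h1 with h1 | h1 <;> simp [h1]
  · rw [Finset.mem_Icc]; exact ⟨h2, h3⟩

lemma ladderF_card (n : ℕ) : (ladderF n).card = 2 * n := by
  unfold ladderF
  rw [Finset.card_product]
  simp [Nat.card_Icc]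

lemma vis_card_le {σ : St} (hI : Inv n k w σ) : σ.vis.card ≤ 2 * n := by
  rw [← ladderF_card n]
  exact Finset.card_le_card (fun x hx => mem_ladderF (hI.vis_lad x hx))

lemma vis_insert_card_le {σ : St} (hI : Inv n k w σ) {v : V} (hv : InLadder n v) :
    (insert v σ.vis).card ≤ 2 * n := by
  rw [← ladderF_card n]
  refine Finset.card_le_card (fun x hx => ?_)
  rcases Finset.mem_insert.1 hx with hx | hx
  · subst hx; exact mem_ladderF hv
  · exact mem_ladderF (hI.vis_lad x hx)

lemma vis2_card_le {σ : St} (hI : Inv n k w σ) : σ.vis2.card ≤ 2 * n := by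
  rw [← ladderF_card n]
  exact Finset.card_le_card (fun x hx => mem_ladderF (hI.vis_lad x (hI.vis2_sub hx)))

lemma vis2_insert_card_le {σ : St} (hI : Inv n k w σ) {v : V} (hv : InLadder n v) :
    (insert v σ.vis2).card ≤ 2 * n := by
  rw [← ladderF_card n]
  refine Finset.card_le_card (fun x hx => ?_)
  rcases Finset.mem_insert.1 hx with hx | hx
  · subst hx; exact mem_ladderF hv
  · exact mem_ladderF (hI.vis_lad x (hI.vis2_sub hx))

lemma meas_decr (hw : IsWeighting n k w) {σ : St} (hI : Inv n k w σ) (hne : σ.ctrl ≠ []) :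
    meas n (step n w σ) < meas n σ := by
  rcases hc : σ.ctrl with _ | ⟨F, rest⟩
  · exact absurd hc hne
  · have hvc := vis_card_le hI
    have hv2c := vis2_card_le hI
    have hsub := Finset.card_le_card hI.vis2_sub
    cases F with
    | f1 u par pend =>
      have sok := hI.sok
      rw [hc] at sok
      obtain ⟨hp, hfOK, hrest⟩ := sok
      cases pend with
      | nil =>
        cases par with
        | some x =>
          rw [step_eq_f1_pop_some hc]
          simp only [meas, hc, List.map_cons, List.sum_cons, fmeas]
          omega
        | none =>
          rw [step_eq_f1_pop_none hc]
          simp only [meas, hc, List.map_cons, List.sum_cons, fmeas]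
          omega
      | cons v pend' =>
        by_cases g : v ∉ σ.vis ∧ w u v = 1
        · have hadjuv : LadderAdj n u v := mem_nbrs_adj (hfOK.2.1 v (List.mem_cons_self))
          have hcard : (insert v σ.vis).card = σ.vis.card + 1 :=
            Finset.card_insert_of_notMem g.1
          have hcard2 : (insert v σ.vis).card ≤ 2 * n := vis_insert_card_le hI hadjuv.2.1
          have hnb : (nbrs n v).length ≤ 3 := nbrs_len v
          rw [step_eq_f1_fwd hc g.1 g.2]
          simp only [meas, hc, List.map_cons, List.sum_cons, fmeas, List.length_cons]
          rw [hcard]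
          omega
        · rw [step_eq_f1_skip hc g]
          simp only [meas, hc, List.map_cons, List.sum_cons, fmeas, List.length_cons]
          omega
    | mk2 v par =>
      have sok := hI.sok
      rw [hc] at sok
      obtain ⟨hp, hfOK, hrest⟩ := sok
      have hcard : (insert v σ.vis2).card = σ.vis2.card + 1 :=
        Finset.card_insert_of_notMem hfOK.2.1
      have hcard2 : (insert v σ.vis2).card ≤ 2 * n :=
        vis2_insert_card_le hI (hI.vis_lad v hfOK.1)
      have hnb : (nbrs n v).length ≤ 3 := nbrs_len v
      rw [step_eq_mk2 hc]
      simp only [meas, hc, List.map_cons, List.sum_cons, fmeas]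
      rw [hcard]
      omega
    | f2 u par pend =>
      have sok := hI.sok
      rw [hc] at sok
      obtain ⟨hp, hfOK, hrest⟩ := sok
      cases pend with
      | nil =>
        cases par with
        | some x =>
          rw [step_eq_f2_pop_some hc]
          simp only [meas, hc, List.map_cons, List.sum_cons, fmeas]
          omega
        | none =>
          rw [step_eq_f2_pop_none hc]
          simp only [meas, hc, List.map_cons, List.sum_cons, fmeas]
          omega
      | cons v pend' =>
        have hadjuv : LadderAdj n u v := mem_nbrs_adj (hfOK.2.1 v (List.mem_cons_self))
        have hnb : (nbrs n v).length ≤ 3 := nbrs_len v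
        by_cases g1 : w u v = 1
        · by_cases g2 : v ∈ σ.vis ∧ v ∉ σ.vis2
          · have hcard : (insert v σ.vis2).card = σ.vis2.card + 1 :=
              Finset.card_insert_of_notMem g2.2
            have hcard2 : (insert v σ.vis2).card ≤ 2 * n :=
              vis2_insert_card_le hI hadjuv.2.1
            rw [step_eq_f2_fwd hc g1 g2.1 g2.2]
            simp only [meas, hc, List.map_cons, List.sum_cons, fmeas, List.length_cons]
            rw [hcard]
            omega
          · rw [step_eq_f2_skip_light hc g1 g2]
            simp only [meas, hc, List.map_cons, List.sum_cons, fmeas, List.length_cons]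
            omega
        · by_cases g2 : v ∈ σ.vis
          · rw [step_eq_f2_skip_heavy hc g1 g2]
            simp only [meas, hc, List.map_cons, List.sum_cons, fmeas, List.length_cons]
            omega
          · have hcard : (insert v σ.vis).card = σ.vis.card + 1 :=
              Finset.card_insert_of_notMem g2
            have hcard2 : (insert v σ.vis).card ≤ 2 * n := vis_insert_card_le hI hadjuv.2.1
            rw [step_eq_dive hc g1 g2]
            simp only [meas, hc, List.map_cons, List.sum_cons, fmeas, List.length_cons]
            rw [hcard]
            omega

end Master

section RunLemmas

variable {n k : ℕ} {w : V → V → ℕ}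

lemma inv_init (hn : 1 ≤ n) : Inv n k w (init n) := by
  have hstart : InLadder n start := ⟨Or.inl rfl, le_refl 1, hn⟩
  constructor
  case walk_ne => simp [init]
  case chain => simp [init, List.Chain']
  case wlast => simp [init]
  case vis_eq => simp [init]
  case vis2_sub => simp [init]
  case vis_lad =>
    intro v hv
    simp only [init, Finset.mem_singleton] at hv
    subst hv; exact hstart
  case sok =>
    refine ⟨rfl, ⟨Finset.mem_singleton_self _, fun y hy => hy, fun x hx => by cases hx⟩, ?_⟩
    refine ⟨rfl, ⟨Finset.mem_singleton_self _, Finset.notMem_empty _, fun x hx => by cases hx⟩, trivial⟩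
  case struct =>
    show f2only []
    intro F hF
    cases hF
  case kinv =>
    intro u hu v hadj hl
    simp only [init, Finset.mem_singleton] at hu
    subst hu
    exact Or.inr ⟨none, nbrs n start, List.mem_cons_self, adj_mem_nbrs hadj⟩
  case k2inv =>
    intro u hu
    simp only [init] at hu
    cases hu
  case ent =>
    intro y hy
    have hy' : y = start := by simpa [init] using hy
    subst hy'
    exact Or.inr ⟨none, List.mem_cons_of_mem _ (List.mem_cons_self)⟩
  case dsvis =>
    intro y hy
    have hy' : y = start := by simpa [init] using hy
    subst hy'
    exact Finset.mem_singleton_self _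
  case cmp =>
    intro u hu
    simp only [init, Finset.mem_singleton] at hu
    subst hu
    exact ⟨start, by simp [init], Relation.ReflTransGen.refl⟩
  case pw =>
    simp [init]
  case ledger =>
    have h1 : walkCost w [start] = 0 := rfl
    have h2 : debts w (init n).ctrl = 0 := by
      simp [init, debts, fdebt, fpar]
    have h3 : nmarks (init n).ctrl = 1 := by
      simp [init, nmarks]
    show walkCost w [start] + debts w (init n).ctrl + 4 ≤
      2 * ({start} : Finset V).card + 2 * ((∅ : Finset V).card + nmarks (init n).ctrl) + 2 * k * ([] : List V).length
    rw [h1, h2, h3]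
    simp

lemma meas_pos {σ : St} (h : σ.ctrl ≠ []) : 1 ≤ meas n σ := by
  rcases hc : σ.ctrl with _ | ⟨F, rest⟩
  · exact absurd hc h
  · have : 1 ≤ fmeas F := by cases F <;> simp [fmeas] <;> omega
    simp only [meas, hc, List.map_cons, List.sum_cons]
    omega

lemma run_nil : ∀ (f : ℕ) {σ : St}, σ.ctrl = [] → run n w f σ = σ := by
  intro f
  induction f with
  | zero => intro σ _; rfl
  | succ f ih =>
    intro σ h
    show run n w f (step n w σ) = σ
    rw [step_eq_nil h]
    exact ih h

lemma run_inv (hw : IsWeighting n k w) :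
    ∀ (f : ℕ) {σ : St}, Inv n k w σ → Inv n k w (run n w f σ) := by
  intro f
  induction f with
  | zero => intro σ h; exact h
  | succ f ih =>
    intro σ h
    exact ih (inv_step hw h)

lemma run_term (hw : IsWeighting n k w) :
    ∀ (f : ℕ) {σ : St}, Inv n k w σ → meas n σ ≤ f → (run n w f σ).ctrl = [] := by
  intro f
  induction f with
  | zero =>
    intro σ hI hm
    by_contra hne
    have := meas_pos (n := n) (σ := σ) (by
      intro hc
      apply hne
      show (run n w 0 σ).ctrl = []
      simpa [run] using hc)
    omega
  | succ f ih =>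
    intro σ hI hm
    by_cases hc : σ.ctrl = []
    · rw [run_nil _ hc]; exact hc
    · have hd := meas_decr hw hI hc
      exact ih (inv_step hw hI) (by omega)

lemma meas_init_le : meas n (init n) ≤ 40 * n + 40 := by
  have h1 : ({start} : Finset V).card = 1 := rfl
  have h2 : (nbrs n start).length ≤ 3 := nbrs_len start
  simp only [meas, init, List.map_cons, List.map_nil, List.sum_cons, List.sum_nil, fmeas, h1]
  omega

end RunLemmas

section Harvest

variable {n k : ℕ} {w : V → V → ℕ}

lemma ladder_conn {S : Set V} (hn : 1 ≤ n) (h0 : ((1, 1) : V) ∈ S)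
    (hcl : ∀ u ∈ S, ∀ v, LadderAdj n u v → v ∈ S) :
    ∀ v : V, InLadder n v → v ∈ S := by
  have key : ∀ j : ℕ, 1 ≤ j → j ≤ n → ((1, j) : V) ∈ S ∧ ((2, j) : V) ∈ S := by
    intro j
    induction j with
    | zero => intro h; omega
    | succ j ih =>
      intro h1 h2
      rcases Nat.eq_or_lt_of_le h1 with he | hlt
      · -- j + 1 = 1
        have hj : j = 0 := by omega
        subst hj
        have hi1 : InLadder n (1, 1) := ⟨Or.inl rfl, le_refl 1, hn⟩
        have hi2 : InLadder n (2, 1) := ⟨Or.inr rfl, le_refl 1, hn⟩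
        have hadj : LadderAdj n ((1, 1) : V) ((2, 1) : V) :=
          ⟨hi1, hi2, Or.inr ⟨rfl, Or.inl rfl⟩⟩
        exact ⟨h0, hcl _ h0 _ hadj⟩
      · have hj1 : 1 ≤ j := by omega
        have hj2 : j ≤ n := by omega
        obtain ⟨ha, hb⟩ := ih hj1 hj2
        have hi1 : InLadder n (1, j) := ⟨Or.inl rfl, hj1, hj2⟩
        have hi1' : InLadder n (1, j + 1) := ⟨Or.inl rfl, by omega, h2⟩
        have hi2' : InLadder n (2, j + 1) := ⟨Or.inr rfl, by omega, h2⟩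
        have hadj1 : LadderAdj n ((1, j) : V) ((1, j + 1) : V) :=
          ⟨hi1, hi1', Or.inl ⟨rfl, Or.inl rfl⟩⟩
        have hadj2 : LadderAdj n ((1, j + 1) : V) ((2, j + 1) : V) :=
          ⟨hi1', hi2', Or.inr ⟨rfl, Or.inl rfl⟩⟩
        have hc1 : ((1, j + 1) : V) ∈ S := hcl _ ha _ hadj1
        exact ⟨hc1, hcl _ hc1 _ hadj2⟩
  intro v hv
  obtain ⟨h1, h2, h3⟩ := hv
  obtain ⟨a, b⟩ := v
  simp only at h1 h2 h3
  rcases h1 with h1 | h1 <;> subst h1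
  · exact (key b h2 h3).1
  · exact (key b h2 h3).2

/-- terminal state: all invariant consequences -/
lemma terminal_coverage (hw : IsWeighting n k w) (hn : 1 ≤ n) {σ : St}
    (hI : Inv n k w σ) (hterm : σ.ctrl = []) :
    ∀ v : V, InLadder n v → v ∈ σ.vis := by
  -- visited is closed under light edges
  have hK : ∀ u ∈ σ.vis, ∀ v, LadderAdj n u v → w u v = 1 → v ∈ σ.vis := by
    intro u hu v hadj hl
    rcases hI.kinv u hu v hadj hl with h | ⟨p, pd, hm, _⟩
    · exact h
    · rw [hterm] at hm; cases hm
  have hK2 : ∀ u ∈ σ.vis2, ∀ v, LadderAdj n u v → v ∈ σ.vis ∧ (w u v = 1 → v ∈ σ.vis2) := by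
    intro u hu v hadj
    rcases hI.k2inv u hu v hadj with h | ⟨p, pd, hm, _⟩
    · exact h
    · rw [hterm] at hm; cases hm
  -- entries are in vis2
  have hent : ∀ x ∈ (start :: σ.ds), x ∈ σ.vis2 := by
    intro x hx
    rcases hI.ent x hx with h | ⟨p, hm⟩
    · exact h
    · rw [hterm] at hm; cases hm
  -- vis2 is closed under reflTransGen light
  have hcl2 : ∀ x y, x ∈ σ.vis2 → Relation.ReflTransGen (light n w) x y → y ∈ σ.vis2 := by
    intro x y hx hr
    induction hr with
    | refl => exact hx
    | tail _ hl ih => exact (hK2 _ ih _ hl.1).2 hl.2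
  -- vis ⊆ vis2
  have hsub : ∀ u ∈ σ.vis, u ∈ σ.vis2 := by
    intro u hu
    obtain ⟨x, hx, hr⟩ := hI.cmp u hu
    exact hcl2 x u (hent x hx) hr
  -- vis closed under all adjacency
  have hclosed : ∀ u ∈ σ.vis, ∀ v, LadderAdj n u v → v ∈ σ.vis := by
    intro u hu v hadj
    exact (hK2 u (hsub u hu) v hadj).1
  -- start in vis
  have hstart : start ∈ σ.vis := hI.dsvis start (List.mem_cons_self)
  exact ladder_conn hn hstart hclosed

lemma terminal_exploration (hw : IsWeighting n k w) (hn : 1 ≤ n) {σ : St}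
    (hI : Inv n k w σ) (hterm : σ.ctrl = []) :
    IsExploration n σ.walk.reverse := by
  refine ⟨⟨?_, ?_⟩, ?_⟩
  · rw [List.head?_reverse]
    exact hI.wlast
  · show List.IsChain _ _
    rw [List.isChain_reverse]
    exact (hI.chain : List.IsChain _ _).imp (fun a b h => ladderAdj_symm h)
  · intro v hv
    have := terminal_coverage hw hn hI hterm v hv
    rw [hI.vis_eq] at this
    rw [List.mem_reverse]
    exact List.mem_toFinset.1 this

lemma terminal_cost (hw : IsWeighting n k w) {σ : St}
    (hI : Inv n k w σ) (hterm : σ.ctrl = []) :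
    walkCost w σ.walk.reverse + 4 ≤ 8 * n + 2 * k * σ.ds.length := by
  have hl := hI.ledger
  rw [hterm] at hl
  have hd : debts w ([] : List Frame) = 0 := rfl
  have hm : nmarks ([] : List Frame) = 0 := rfl
  rw [hd, hm] at hl
  have hv1 : σ.vis.card ≤ 2 * n := vis_card_le hI
  have hv2 : σ.vis2.card ≤ 2 * n := vis2_card_le hI
  rw [walkCost_reverse w hw.1]
  omega

end Harvest

section LowerBound

variable {n k : ℕ} {w : V → V → ℕ}

def gd (q : List V) (i : ℕ) : V := q.getD i start

lemma gd_cons_succ (a : V) (q : List V) (i : ℕ) : gd (a :: q) (i + 1) = gd q i := by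
  simp [gd]

lemma walkCost_eq_sum (w : V → V → ℕ) :
    ∀ q : List V, walkCost w q = ∑ i ∈ Finset.range (q.length - 1), w (gd q i) (gd q (i + 1)) := by
  intro q
  induction q with
  | nil => simp [walkCost]
  | cons a t ih =>
    cases t with
    | nil => simp [walkCost, gd]
    | cons b t' =>
      rw [walkCost_cons_cons, ih]
      have hlen : (a :: b :: t').length - 1 = ((b :: t').length - 1) + 1 := by
        simp
      rw [hlen, Finset.sum_range_succ']
      have h0 : w (gd (a :: b :: t') 0) (gd (a :: b :: t') 1) = w a b := rfl
      have hs : ∀ i, w (gd (a :: b :: t') (i + 1)) (gd (a :: b :: t') (i + 2)) =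
          w (gd (b :: t') i) (gd (b :: t') (i + 1)) := by
        intro i
        rw [gd_cons_succ]
        have : gd (a :: b :: t') (i + 2) = gd (b :: t') (i + 1) := gd_cons_succ a (b :: t') (i + 1)
        rw [this]
      simp only [h0, hs]
      ring

lemma chain_adj {q : List V} (hq : q.Chain' (LadderAdj n)) {i : ℕ} (hi : i + 1 < q.length) :
    LadderAdj n (gd q i) (gd q (i + 1)) := by
  have h := List.isChain_iff_getElem.1 (hq : List.IsChain _ _) i (by omega)
  have e1 : gd q i = q.get ⟨i, by omega⟩ := List.getD_eq_get q start ⟨i, by omega⟩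
  have e2 : gd q (i + 1) = q.get ⟨i + 1, hi⟩ := List.getD_eq_get q start ⟨i + 1, hi⟩
  rw [e1, e2]
  exact h

def Hset (w : V → V → ℕ) (q : List V) : Finset ℕ :=
  (Finset.range (q.length - 1)).filter (fun i => w (gd q i) (gd q (i + 1)) ≠ 1)

lemma cost_lb (hw : IsWeighting n k w) (hk : 1 ≤ k) {q : List V}
    (hq : q.Chain' (LadderAdj n)) :
    (q.length - 1) + (k - 1) * (Hset w q).card ≤ walkCost w q := by
  rw [walkCost_eq_sum w q]
  classical
  set p : ℕ → Prop := fun i => w (gd q i) (gd q (i + 1)) ≠ 1 with hp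
  set f : ℕ → ℕ := fun i => w (gd q i) (gd q (i + 1)) with hf
  have hsplit : ∑ i ∈ (Finset.range (q.length - 1)).filter p, f i +
      ∑ i ∈ (Finset.range (q.length - 1)).filter (fun i => ¬ p i), f i =
      ∑ i ∈ Finset.range (q.length - 1), f i :=
    Finset.sum_filter_add_sum_filter_not _ _ _
  have hH : ∑ i ∈ (Finset.range (q.length - 1)).filter p, f i =
      k * ((Finset.range (q.length - 1)).filter p).card := by
    rw [Finset.sum_congr rfl (g := fun _ => k), Finset.sum_const, smul_eq_mul, mul_comm]
    intro i hi
    rw [Finset.mem_filter, Finset.mem_range] at hi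
    have hadj : LadderAdj n (gd q i) (gd q (i + 1)) := chain_adj hq (by omega)
    rcases hw.2 _ _ hadj with h | h
    · exact absurd h hi.2
    · exact h
  have hL : ∑ i ∈ (Finset.range (q.length - 1)).filter (fun i => ¬ p i), f i =
      ((Finset.range (q.length - 1)).filter (fun i => ¬ p i)).card := by
    rw [Finset.sum_congr rfl (g := fun _ => 1), Finset.sum_const, smul_eq_mul, mul_one]
    intro i hi
    rw [Finset.mem_filter] at hi
    exact not_not.1 hi.2
  have hcards : ((Finset.range (q.length - 1)).filter p).card +
      ((Finset.range (q.length - 1)).filter (fun i => ¬ p i)).card = q.length - 1 := by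
    rw [Finset.card_filter_add_card_filter_not, Finset.card_range]
  have hmul : k * ((Finset.range (q.length - 1)).filter p).card =
      (k - 1) * ((Finset.range (q.length - 1)).filter p).card +
        ((Finset.range (q.length - 1)).filter p).card := by
    have h1 : k - 1 + 1 = k := Nat.succ_pred_eq_of_pos hk
    calc k * ((Finset.range (q.length - 1)).filter p).card
        = (k - 1 + 1) * ((Finset.range (q.length - 1)).filter p).card := by rw [h1]
      _ = (k - 1) * ((Finset.range (q.length - 1)).filter p).card +
          ((Finset.range (q.length - 1)).filter p).card := by ring
  have hHeq : Hset w q = (Finset.range (q.length - 1)).filter p := rfl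
  rw [hHeq]
  linarith [hsplit, hH, hL, hcards, hmul]

lemma len_lb {q : List V} (hcov : ∀ v, InLadder n v → v ∈ q) : 2 * n ≤ q.length := by
  have hsub : ladderF n ⊆ q.toFinset := by
    intro x hx
    rw [List.mem_toFinset]
    unfold ladderF at hx
    rw [Finset.mem_product, Finset.mem_Icc] at hx
    refine hcov x ⟨?_, hx.2.1, hx.2.2⟩
    have := hx.1
    simp only [Finset.mem_insert, Finset.mem_singleton] at this
    exact this
  calc 2 * n = (ladderF n).card := (ladderF_card n).symm
    _ ≤ q.toFinset.card := Finset.card_le_card hsub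
    _ ≤ q.length := q.toFinset_card_le

lemma dives_le_heavy (hw : IsWeighting n k w) {q : List V}
    (hq : q.Chain' (LadderAdj n)) (hcov : ∀ v, InLadder n v → v ∈ q)
    (hhead : q.head? = some start) {ds : List V}
    (hpw : (start :: ds).Pairwise (fun a b => ¬ Relation.ReflTransGen (light n w) a b))
    (hlad : ∀ x ∈ ds, InLadder n x) :
    ds.length ≤ (Hset w q).card := by
  classical
  have hsymm : Symmetric (Relation.ReflTransGen (light n w)) :=
    by
      haveI : Std.Symm (light n w) := ⟨light_symm hw.1⟩
      intro a b h
      exact Std.Symm.symm a b h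
  have hnodup : ds.Nodup := by
    have hpd : ds.Pairwise (fun a b => ¬ Relation.ReflTransGen (light n w) a b) :=
      (List.pairwise_cons.1 hpw).2
    exact hpd.imp (fun {a b} hab => by
      intro he
      exact hab (he ▸ Relation.ReflTransGen.refl))
  have hstart_not : ∀ x ∈ ds, ¬ Relation.ReflTransGen (light n w) start x :=
    (List.pairwise_cons.1 hpw).1
  have hpair : ∀ x ∈ ds, ∀ y ∈ ds, x ≠ y → ¬ Relation.ReflTransGen (light n w) x y := by
    have hpd : ds.Pairwise (fun a b => ¬ Relation.ReflTransGen (light n w) a b) :=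
      (List.pairwise_cons.1 hpw).2
    have hS : Symmetric (fun a b => ¬ Relation.ReflTransGen (light n w) a b) := by
      intro a b hab hr
      exact hab (hsymm hr)
    intro x hx y hy hxy
    haveI : Std.Symm (fun a b => ¬ Relation.ReflTransGen (light n w) a b) := ⟨fun a b h => hS h⟩
    exact hpd.forall hx hy hxy
  -- existence of a first index reaching the component of x
  have hex : ∀ x ∈ ds, ∃ i, i < q.length ∧ Relation.ReflTransGen (light n w) x (gd q i) := by
    intro x hx
    have hxq : x ∈ q := hcov x (hlad x hx)
    obtain ⟨i, hi, he⟩ := List.mem_iff_getElem.1 hxq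
    refine ⟨i, hi, ?_⟩
    have : gd q i = x := by
      rw [gd, List.getD_eq_getElem q start hi, he]
    rw [this]
  -- the function t
  let t : V → ℕ := fun x => if h : ∃ i, i < q.length ∧ Relation.ReflTransGen (light n w) x (gd q i)
    then Nat.find h else 0
  have ht_spec : ∀ x ∈ ds, t x < q.length ∧ Relation.ReflTransGen (light n w) x (gd q (t x)) := by
    intro x hx
    have h := hex x hx
    simp only [t, dif_pos h]
    exact Nat.find_spec h
  have ht_min : ∀ x ∈ ds, ∀ j < t x, ¬ (j < q.length ∧ Relation.ReflTransGen (light n w) x (gd q j)) := by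
    intro x hx j hj
    have h := hex x hx
    simp only [t, dif_pos h] at hj ⊢
    exact Nat.find_min h hj
  have hq_ne : q ≠ [] := by
    intro he
    rw [he] at hhead
    cases hhead
  have hgd0 : gd q 0 = start := by
    cases q with
    | nil => exact absurd rfl hq_ne
    | cons a t' =>
      have : a = start := by
        simpa using hhead
      simp [gd, this]
  have ht_pos : ∀ x ∈ ds, 1 ≤ t x := by
    intro x hx
    by_contra hc
    push_neg at hc
    have h0 : t x = 0 := by omega
    have := (ht_spec x hx).2
    rw [h0, hgd0] at this
    exact hstart_not x hx (hsymm this)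
  -- each t x - 1 is a heavy index
  have hmem : ∀ x ∈ ds, t x - 1 ∈ Hset w q := by
    intro x hx
    obtain ⟨hlt, hr⟩ := ht_spec x hx
    have hpos := ht_pos x hx
    unfold Hset
    rw [Finset.mem_filter, Finset.mem_range]
    constructor
    · omega
    · intro hlight
      have he : t x - 1 + 1 = t x := by omega
      have hadj : LadderAdj n (gd q (t x - 1)) (gd q (t x - 1 + 1)) :=
        chain_adj hq (by omega)
      rw [he] at hadj hlight
      have hstep : light n w (gd q (t x)) (gd q (t x - 1)) :=
        light_symm hw.1 ⟨hadj, hlight⟩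
      have : Relation.ReflTransGen (light n w) x (gd q (t x - 1)) := hr.tail hstep
      exact ht_min x hx (t x - 1) (by omega) ⟨by omega, this⟩
  -- injectivity
  have hinj : ∀ x ∈ ds.toFinset, ∀ y ∈ ds.toFinset, t x - 1 = t y - 1 → x = y := by
    intro x hx y hy he
    rw [List.mem_toFinset] at hx hy
    by_contra hxy
    have hex' : t x = t y := by
      have h1 := ht_pos x hx
      have h2 := ht_pos y hy
      omega
    have h1 := (ht_spec x hx).2
    have h2 := (ht_spec y hy).2
    rw [hex'] at h1
    exact hpair x hx y hy hxy (h1.trans (hsymm h2))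
  have hcard : ds.length = ds.toFinset.card := (List.toFinset_card_of_nodup hnodup).symm
  rw [hcard]
  exact Finset.card_le_card_of_injOn (fun x => t x - 1)
    (fun x hx => hmem x (List.mem_toFinset.1 hx)) hinj

end LowerBound

section Online

variable {n k : ℕ} {w w' : V → V → ℕ}

lemma step_walk_suffix (n : ℕ) (w : V → V → ℕ) (σ : St) :
    ∃ l, (step n w σ).walk = l ++ σ.walk := by
  rcases hc : σ.ctrl with _ | ⟨F, rest⟩
  · exact ⟨[], by rw [step_eq_nil hc];simp⟩
  · cases F with
    | f1 u par pend =>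
      cases pend with
      | nil =>
        cases par with
        | some x => exact ⟨[x], by rw [step_eq_f1_pop_some hc];simp⟩
        | none => exact ⟨[], by rw [step_eq_f1_pop_none hc];simp⟩
      | cons v pend' =>
        by_cases g : v ∉ σ.vis ∧ w u v = 1
        · exact ⟨[v], by rw [step_eq_f1_fwd hc g.1 g.2];simp⟩
        · exact ⟨[], by rw [step_eq_f1_skip hc g];simp⟩
    | mk2 v par => exact ⟨[], by rw [step_eq_mk2 hc];simp⟩
    | f2 u par pend =>
      cases pend with
      | nil =>
        cases par with
        | some x => exact ⟨[x], by rw [step_eq_f2_pop_some hc];simp⟩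
        | none => exact ⟨[], by rw [step_eq_f2_pop_none hc];simp⟩
      | cons v pend' =>
        by_cases g1 : w u v = 1
        · by_cases g2 : v ∈ σ.vis ∧ v ∉ σ.vis2
          · exact ⟨[v], by rw [step_eq_f2_fwd hc g1 g2.1 g2.2];simp⟩
          · exact ⟨[], by rw [step_eq_f2_skip_light hc g1 g2];simp⟩
        · by_cases g2 : v ∈ σ.vis
          · exact ⟨[], by rw [step_eq_f2_skip_heavy hc g1 g2];simp⟩
          · exact ⟨[v], by rw [step_eq_dive hc g1 g2];simp⟩

lemma run_walk_suffix (n : ℕ) (w : V → V → ℕ) :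
    ∀ (f : ℕ) (σ : St), ∃ l, (run n w f σ).walk = l ++ σ.walk := by
  intro f
  induction f with
  | zero => intro σ; exact ⟨[], rfl⟩
  | succ f ih =>
    intro σ
    obtain ⟨l1, h1⟩ := step_walk_suffix n w σ
    obtain ⟨l2, h2⟩ := ih (step n w σ)
    exact ⟨l2 ++ l1, by show (run n w f (step n w σ)).walk = _; rw [h2, h1, List.append_assoc]⟩

lemma run_add (n : ℕ) (w : V → V → ℕ) :
    ∀ (a b : ℕ) (σ : St), run n w (a + b) σ = run n w b (run n w a σ) := by
  intro a
  induction a with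
  | zero => intro b σ; rw [Nat.zero_add]; rfl
  | succ a ih =>
    intro b σ
    have h1 : a + 1 + b = (a + b) + 1 := by omega
    rw [h1]
    show run n w (a + b) (step n w σ) = run n w b (run n w a (step n w σ))
    exact ih b (step n w σ)

lemma step_agree {σ : St} (hI : Inv n k w σ)
    (hagr : ∀ u v, LadderAdj n u v → u ∈ σ.walk → w u v = w' u v) :
    step n w σ = step n w' σ := by
  rcases hc : σ.ctrl with _ | ⟨F, rest⟩
  · rw [step_eq_nil hc, step_eq_nil hc]
  · have sok := hI.sok
    rw [hc] at sok
    obtain ⟨hp, hfOK, hrest⟩ := sok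
    cases F with
    | f1 u par pend =>
      cases pend with
      | nil =>
        cases par with
        | some x => rw [step_eq_f1_pop_some hc, step_eq_f1_pop_some hc]
        | none => rw [step_eq_f1_pop_none hc, step_eq_f1_pop_none hc]
      | cons v pend' =>
        have hadjuv : LadderAdj n u v := mem_nbrs_adj (hfOK.2.1 v (List.mem_cons_self))
        have huw : u ∈ σ.walk := by
          have := hfOK.1
          rw [hI.vis_eq] at this
          exact List.mem_toFinset.1 this
        have hvv : w u v = w' u v := hagr u v hadjuv huw
        by_cases g : v ∉ σ.vis ∧ w u v = 1
        · rw [step_eq_f1_fwd hc g.1 g.2, step_eq_f1_fwd hc g.1 (hvv ▸ g.2)]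
        · rw [step_eq_f1_skip hc g, step_eq_f1_skip hc (by rw [← hvv]; exact g)]
    | mk2 v par => rw [step_eq_mk2 hc, step_eq_mk2 hc]
    | f2 u par pend =>
      cases pend with
      | nil =>
        cases par with
        | some x => rw [step_eq_f2_pop_some hc, step_eq_f2_pop_some hc]
        | none => rw [step_eq_f2_pop_none hc, step_eq_f2_pop_none hc]
      | cons v pend' =>
        have hadjuv : LadderAdj n u v := mem_nbrs_adj (hfOK.2.1 v (List.mem_cons_self))
        have huw : u ∈ σ.walk := by
          have := hI.vis2_sub hfOK.1
          rw [hI.vis_eq] at this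
          exact List.mem_toFinset.1 this
        have hvv : w u v = w' u v := hagr u v hadjuv huw
        by_cases g1 : w u v = 1
        · by_cases g2 : v ∈ σ.vis ∧ v ∉ σ.vis2
          · rw [step_eq_f2_fwd hc g1 g2.1 g2.2, step_eq_f2_fwd hc (hvv ▸ g1) g2.1 g2.2]
          · rw [step_eq_f2_skip_light hc g1 g2, step_eq_f2_skip_light hc (hvv ▸ g1) g2]
        · by_cases g2 : v ∈ σ.vis
          · rw [step_eq_f2_skip_heavy hc g1 g2, step_eq_f2_skip_heavy hc (by rw [← hvv]; exact g1) g2]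
          · rw [step_eq_dive hc g1 g2, step_eq_dive hc (by rw [← hvv]; exact g1) g2]

end Online

section Online2

variable {n k : ℕ} {w w' : V → V → ℕ}

lemma run_succ (n : ℕ) (w : V → V → ℕ) (f : ℕ) (σ : St) :
    run n w (f + 1) σ = step n w (run n w f σ) :=
  run_add n w f 1 σ

lemma walk_mem_take (hw : IsWeighting n k w) (hn : 1 ≤ n) {f t : ℕ}
    (hf : f ≤ 40 * n + 40) (hlen : (run n w f (init n)).walk.length ≤ t + 1) {u : V}
    (hu : u ∈ (run n w f (init n)).walk) : u ∈ (algo n w).take (t + 1) := by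
  set σf := run n w f (init n) with hσf
  have hsplit : run n w (40 * n + 40) (init n) = run n w (40 * n + 40 - f) σf := by
    rw [hσf, ← run_add]
    congr 1
    omega
  obtain ⟨ext, hext⟩ := run_walk_suffix n w (40 * n + 40 - f) σf
  have halgo : algo n w = σf.walk.reverse ++ ext.reverse := by
    unfold algo
    rw [hsplit, hext, List.reverse_append]
  have hpref : σf.walk.reverse <+: algo n w := ⟨ext.reverse, halgo.symm⟩
  have htake : σf.walk.reverse = (algo n w).take σf.walk.reverse.length := by
    exact (List.prefix_iff_eq_take.1 hpref)
  have hu1 : u ∈ (algo n w).take σf.walk.reverse.length := by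
    rw [← htake]
    exact List.mem_reverse.2 hu
  have hle : σf.walk.reverse.length ≤ t + 1 := by
    rw [List.length_reverse]
    exact hlen
  have heq : (algo n w).take σf.walk.reverse.length =
      ((algo n w).take (t + 1)).take σf.walk.reverse.length := by
    rw [List.take_take, min_eq_left hle]
  rw [heq] at hu1
  exact (List.take_prefix _ _).subset hu1

lemma online_run (hw : IsWeighting n k w) (hw' : IsWeighting n k w') (hn : 1 ≤ n) (t : ℕ)
    (hagr : ∀ u v, LadderAdj n u v →
      (u ∈ (algo n w).take (t + 1) ∨ v ∈ (algo n w).take (t + 1)) → w u v = w' u v) :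
    ∀ f : ℕ, f ≤ 40 * n + 40 →
      (run n w f (init n) = run n w' f (init n)) ∨
      ((run n w f (init n)).walk.reverse.take (t + 2) =
          (run n w' f (init n)).walk.reverse.take (t + 2) ∧
        t + 2 ≤ (run n w f (init n)).walk.length ∧
        t + 2 ≤ (run n w' f (init n)).walk.length) := by
  intro f
  induction f with
  | zero => intro _; exact Or.inl rfl
  | succ f ih =>
    intro hf1
    have hf : f ≤ 40 * n + 40 := by omega
    rcases ih hf with heq | ⟨hpre, hl1, hl2⟩
    · by_cases hlen : (run n w f (init n)).walk.length ≤ t + 1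
      · left
        rw [run_succ, run_succ, ← heq]
        refine step_agree (run_inv hw f (inv_init hn)) ?_
        intro u v hadj hu
        exact hagr u v hadj (Or.inl (walk_mem_take hw hn hf hlen hu))
      · right
        push_neg at hlen
        obtain ⟨l1, h1⟩ := step_walk_suffix n w (run n w f (init n))
        obtain ⟨l2, h2⟩ := step_walk_suffix n w' (run n w' f (init n))
        rw [run_succ, run_succ]
        rw [h1, h2, ← heq]
        constructor
        · rw [List.reverse_append, List.reverse_append]
          rw [List.take_append_of_le_length (by rw [List.length_reverse]; omega),
            List.take_append_of_le_length (by rw [List.length_reverse]; omega)]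
        · constructor
          · rw [List.length_append]; omega
          · rw [List.length_append]; omega
    · right
      obtain ⟨l1, h1⟩ := step_walk_suffix n w (run n w f (init n))
      obtain ⟨l2, h2⟩ := step_walk_suffix n w' (run n w' f (init n))
      rw [run_succ, run_succ, h1, h2]
      constructor
      · rw [List.reverse_append, List.reverse_append]
        rw [List.take_append_of_le_length (by rw [List.length_reverse]; omega),
          List.take_append_of_le_length (by rw [List.length_reverse]; omega)]
        exact hpre
      · constructor
        · rw [List.length_append]; omega
        · rw [List.length_append]; omega

lemma online_take (hw : IsWeighting n k w) (hw' : IsWeighting n k w') (hn : 1 ≤ n) (t : ℕ)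
    (hagr : ∀ u v, LadderAdj n u v →
      (u ∈ (algo n w).take (t + 1) ∨ v ∈ (algo n w).take (t + 1)) → w u v = w' u v) :
    (algo n w).take (t + 2) = (algo n w').take (t + 2) := by
  rcases online_run hw hw' hn t hagr (40 * n + 40) (le_refl _) with heq | ⟨hpre, _, _⟩
  · unfold algo
    rw [heq]
  · exact hpre

end Online2

section Final

lemma algo_exploration {n k : ℕ} {w : V → V → ℕ} (hw : IsWeighting n k w) (hn : 1 ≤ n) :
    IsExploration n (algo n w) := by
  have hI0 : Inv n k w (init n) := inv_init hn
  have hIτ : Inv n k w (run n w (40 * n + 40) (init n)) := run_inv hw _ hI0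
  have hterm : (run n w (40 * n + 40) (init n)).ctrl = [] :=
    run_term hw _ hI0 meas_init_le
  exact terminal_exploration hw hn hIτ hterm

lemma algo_cost {n k : ℕ} {w : V → V → ℕ} (hw : IsWeighting n k w) (hn : 1 ≤ n) (hk : 5 ≤ k) :
    walkCost w (algo n w) ≤ 4 * OPT n w := by
  have hI0 : Inv n k w (init n) := inv_init hn
  have hIτ : Inv n k w (run n w (40 * n + 40) (init n)) := run_inv hw _ hI0
  have hterm : (run n w (40 * n + 40) (init n)).ctrl = [] :=
    run_term hw _ hI0 meas_init_le
  set σ := run n w (40 * n + 40) (init n) with hσ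
  have hcost : walkCost w σ.walk.reverse + 4 ≤ 8 * n + 2 * k * σ.ds.length :=
    terminal_cost hw hIτ hterm
  -- OPT witness
  have hne : {c | ∃ p, IsExploration n p ∧ walkCost w p = c}.Nonempty :=
    ⟨walkCost w (algo n w), algo n w, algo_exploration hw hn, rfl⟩
  have hmem : OPT n w ∈ {c | ∃ p, IsExploration n p ∧ walkCost w p = c} := Nat.sInf_mem hne
  obtain ⟨q, hq, hqc⟩ := hmem
  have hqchain : q.Chain' (LadderAdj n) := hq.1.2
  have hqhead : q.head? = some start := hq.1.1
  have hqcov : ∀ v, InLadder n v → v ∈ q := hq.2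
  have hlen : 2 * n ≤ q.length := len_lb hqcov
  have hds : σ.ds.length ≤ (Hset w q).card := by
    refine dives_le_heavy hw hqchain hqcov hqhead hIτ.pw ?_
    intro x hx
    exact hIτ.vis_lad x (hIτ.dsvis x (List.mem_cons_of_mem _ hx))
  have hlb : (q.length - 1) + (k - 1) * (Hset w q).card ≤ OPT n w := by
    rw [← hqc]
    exact cost_lb hw (by omega) hqchain
  have hmul1 : (k - 1) * σ.ds.length ≤ (k - 1) * (Hset w q).card :=
    Nat.mul_le_mul_left _ hds
  have hmul2 : 2 * k * σ.ds.length ≤ 4 * ((k - 1) * σ.ds.length) := by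
    have h1 : 2 * k ≤ 4 * (k - 1) := by omega
    calc 2 * k * σ.ds.length ≤ 4 * (k - 1) * σ.ds.length :=
          Nat.mul_le_mul_right _ h1
      _ = 4 * ((k - 1) * σ.ds.length) := by rw [mul_assoc]
  have halgo : walkCost w (algo n w) = walkCost w σ.walk.reverse := rfl
  rw [halgo]
  obtain ⟨a, ha⟩ : ∃ a, a = (k - 1) * σ.ds.length := ⟨_, rfl⟩
  obtain ⟨b, hb⟩ : ∃ b, b = (k - 1) * (Hset w q).card := ⟨_, rfl⟩
  obtain ⟨c, hc⟩ : ∃ c, c = 2 * k * σ.ds.length := ⟨_, rfl⟩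
  rw [← ha, ← hb] at hmul1
  rw [← hc, ← ha] at hmul2
  rw [← hb] at hlb
  rw [← hc] at hcost
  omega

theorem ladder_four_competitive' (k : ℕ) (hk : 5 ≤ k) :
    ∃ α : ℕ, ∀ n : ℕ, 1 ≤ n →
      ∃ A : (V → V → ℕ) → List V, OnlineStrategy n k A ∧
        ∀ w, IsWeighting n k w →
          walkCost w (A w) ≤ 4 * OPT n w + α := by
  refine ⟨0, fun n hn => ⟨fun w => algo n w, ⟨?_, ?_⟩, ?_⟩⟩
  · intro w hw
    exact algo_exploration hw hn
  · intro w w' hw hw' t hagr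
    exact online_take hw hw' hn t hagr
  · intro w hw
    have h := algo_cost hw hn hk
    show walkCost w (algo n w) ≤ 4 * OPT n w + 0
    omega

end Final

end LP

/-- Theorem 3: there is a 4-competitive deterministic online strategy for
exploring weighted ladder grids with weights in `{1,k}`. -/
theorem ladder_four_competitive (k : ℕ) (hk : 5 ≤ k) :
    ∃ α : ℕ, ∀ n : ℕ, 1 ≤ n →
      ∃ A : (V → V → ℕ) → List V, OnlineStrategy n k A ∧
        ∀ w, IsWeighting n k w →
          walkCost w (A w) ≤ 4 * OPT n w + α := by
  exact LP.ladder_four_competitive' k hk
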